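/- arXiv:math/0606327 — 6 statements merged into one kernel-verified Lean document; each statement's English description precedes it below -/
import Mathlib

section
/- With the block operator a as above, if a ≥ 0, a₊ and a₋ are trace class, and t is Hilbert–Schmidt, then the Hilbert–Schmidt norm of t satisfies ‖t‖₂ ≤ (Tr a)/√2. -/
open ContinuousLinearMap

noncomputable section

/-- The block operator `[[A, B], [C, D]]` on the Hilbert space `H₊ ⊕ H₋` (here `WithLp 2 (E × F)`),
acting by `(ξ, η) ↦ (A ξ + B η, C ξ + D η)`. -/
def blockOp {E F : Type*} [NormedAddCommGroup E] [InnerProductSpace ℂ E]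
    [NormedAddCommGroup F] [InnerProductSpace ℂ F]
    (A : E →L[ℂ] E) (B : F →L[ℂ] E) (C : E →L[ℂ] F) (D : F →L[ℂ] F) :
    WithLp 2 (E × F) →L[ℂ] WithLp 2 (E × F) :=
  ((WithLp.prodContinuousLinearEquiv 2 ℂ E F).symm : E × F →L[ℂ] WithLp 2 (E × F)) ∘L
    ((A.coprod B).prod (C.coprod D)) ∘L
    ((WithLp.prodContinuousLinearEquiv 2 ℂ E F) : WithLp 2 (E × F) →L[ℂ] E × F)

/-- Expansion of positivity of the block operator. -/
lemma aux_block_expand {E F : Type*} [NormedAddCommGroup E] [InnerProductSpace ℂ E]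
    [CompleteSpace E] [NormedAddCommGroup F] [InnerProductSpace ℂ F] [CompleteSpace F]
    (apos : E →L[ℂ] E) (aneg : F →L[ℂ] F) (t : F →L[ℂ] E)
    (ha : (blockOp apos t (adjoint t) aneg).IsPositive) (ξ : E) (η : F) :
    0 ≤ (inner ℂ ξ (apos ξ) : ℂ).re + (inner ℂ η (aneg η) : ℂ).re + 2 * (inner ℂ ξ (t η) : ℂ).re := by
  have h := ha.2 ((WithLp.equiv 2 (E × F)).symm (ξ, η))
  have happly : (blockOp apos t (adjoint t) aneg) ((WithLp.equiv 2 (E × F)).symm (ξ, η)) =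
      (WithLp.equiv 2 (E × F)).symm (apos ξ + t η, (adjoint t) ξ + aneg η) := rfl
  rw [reApplyInnerSelf, happly] at h
  simp only [WithLp.prod_inner_apply, WithLp.equiv_symm_apply, WithLp.ofLp_toLp,
    inner_add_left, map_add, RCLike.re_to_complex] at h
  rw [adjoint_inner_left] at h
  have h1 : (inner ℂ (apos ξ) ξ : ℂ).re = (inner ℂ ξ (apos ξ) : ℂ).re := by
    simpa using inner_re_symm (𝕜 := ℂ) _ _
  have h2 : (inner ℂ (aneg η) η : ℂ).re = (inner ℂ η (aneg η) : ℂ).re := by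
    simpa using inner_re_symm (𝕜 := ℂ) _ _
  have h3 : (inner ℂ (t η) ξ : ℂ).re = (inner ℂ ξ (t η) : ℂ).re := by
    simpa using inner_re_symm (𝕜 := ℂ) _ _
  rw [h1, h2, h3] at h
  linarith

/-- Cauchy–Schwarz-type inequality for the off-diagonal block of a positive block operator. -/
lemma aux_key {E F : Type*} [NormedAddCommGroup E] [InnerProductSpace ℂ E] [CompleteSpace E]
    [NormedAddCommGroup F] [InnerProductSpace ℂ F] [CompleteSpace F]
    (apos : E →L[ℂ] E) (aneg : F →L[ℂ] F) (t : F →L[ℂ] E)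
    (hpos : apos.IsPositive) (hneg : aneg.IsPositive)
    (ha : (blockOp apos t (adjoint t) aneg).IsPositive) (ξ : E) (η : F) :
    ‖(inner ℂ ξ (t η) : ℂ)‖ ^ 2 ≤ (inner ℂ ξ (apos ξ) : ℂ).re * (inner ℂ η (aneg η) : ℂ).re := by
  have hx := aux_block_expand apos aneg t ha
  set c : ℂ := inner ℂ ξ (t η) with hc
  set A := (inner ℂ ξ (apos ξ) : ℂ).re with hAdef
  set B := (inner ℂ η (aneg η) : ℂ).re with hBdef
  have hA : 0 ≤ A := by simpa [hAdef] using (Complex.nonneg_iff.mp (hpos.inner_nonneg_right ξ)).1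
  have hB : 0 ≤ B := by simpa [hBdef] using (Complex.nonneg_iff.mp (hneg.inner_nonneg_right η)).1
  have H : ∀ s : ℝ, 0 ≤ A + s ^ 2 * ‖c‖ ^ 2 * B - 2 * s * ‖c‖ ^ 2 := by
    intro s
    have h := hx ξ ((((-s : ℂ)) * (starRingEnd ℂ) c) • η)
    set μ : ℂ := ((-s : ℂ)) * (starRingEnd ℂ) c with hμ
    have e1 : (inner ℂ (μ • η) (aneg (μ • η)) : ℂ).re = ‖μ‖ ^ 2 * B := by
      rw [map_smul, inner_smul_left, inner_smul_right, ← mul_assoc, Complex.mul_re]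
      have h1 : ((starRingEnd ℂ) μ * μ).re = ‖μ‖ ^ 2 := by
        rw [RCLike.conj_mul]; norm_cast
      have h2 : ((starRingEnd ℂ) μ * μ).im = 0 := by
        rw [RCLike.conj_mul]; norm_cast
      rw [h1, h2]; ring
    have e2 : (inner ℂ ξ (t (μ • η)) : ℂ).re = -s * ‖c‖ ^ 2 := by
      rw [map_smul, inner_smul_right, ← hc, hμ]
      rw [Complex.sq_norm, Complex.normSq_apply]
      simp [Complex.mul_re, Complex.mul_im]
      ring
    rw [e1, e2] at h
    have e3 : ‖μ‖ ^ 2 = s ^ 2 * ‖c‖ ^ 2 := by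
      rw [hμ, norm_mul]
      simp [mul_pow]
    rw [e3] at h
    linarith
  rcases eq_or_lt_of_le (sq_nonneg ‖c‖ : (0:ℝ) ≤ ‖c‖ ^ 2) with hd | hd
  · rw [← hd]; exact mul_nonneg hA hB
  rcases eq_or_lt_of_le hB with hB0 | hB0
  · exfalso
    have hd' : ‖c‖ ^ 2 ≠ 0 := ne_of_gt hd
    have hc0 : ‖c‖ ≠ 0 := fun h0 => hd' (by rw [h0]; ring)
    have h2 : 2 * ((A + 1) / (2 * ‖c‖ ^ 2)) * ‖c‖ ^ 2 = A + 1 := by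
      rw [show 2 * ((A + 1) / (2 * ‖c‖ ^ 2)) * ‖c‖ ^ 2
          = (A + 1) / (2 * ‖c‖ ^ 2) * (2 * ‖c‖ ^ 2) by ring,
        div_mul_cancel₀ _ (by positivity : (2 * ‖c‖ ^ 2 : ℝ) ≠ 0)]
    have h3 := H ((A + 1) / (2 * ‖c‖ ^ 2))
    rw [← hB0] at h3
    nlinarith [h3, h2]
  · have h3 := H B⁻¹
    have hB' : B ≠ 0 := ne_of_gt hB0
    have h4 : B⁻¹ ^ 2 * ‖c‖ ^ 2 * B = ‖c‖ ^ 2 * B⁻¹ := by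
      field_simp
    have h5 : 2 * B⁻¹ * ‖c‖ ^ 2 = 2 * (‖c‖ ^ 2 * B⁻¹) := by ring
    rw [h4, h5] at h3
    have h6 : ‖c‖ ^ 2 * B⁻¹ ≤ A := by linarith
    calc ‖c‖ ^ 2 = ‖c‖ ^ 2 * B⁻¹ * B := by field_simp
    _ ≤ A * B := by exact mul_le_mul_of_nonneg_right h6 hB

/-- Parseval. -/
lemma aux_parseval {E : Type*} [NormedAddCommGroup E] [InnerProductSpace ℂ E] [CompleteSpace E]
    {ι : Type*} (b : HilbertBasis ι ℂ E) (x : E) :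
    HasSum (fun i => ‖(inner ℂ (b i) x : ℂ)‖ ^ 2) (‖x‖ ^ 2) := by
  have h := (b.hasSum_inner_mul_inner x x).mapL Complex.reCLM
  have e : ∀ i, Complex.reCLM ((inner ℂ x (b i) : ℂ) * (inner ℂ (b i) x : ℂ))
      = ‖(inner ℂ (b i) x : ℂ)‖ ^ 2 := by
    intro i
    simp only [Complex.reCLM_apply]
    rw [← inner_conj_symm x (b i), RCLike.conj_mul]
    norm_cast
  have e2 : Complex.reCLM (inner ℂ x x : ℂ) = ‖x‖ ^ 2 := by
    simpa using inner_self_eq_norm_sq (𝕜 := ℂ) x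
  rw [e2] at h
  exact h.congr_fun fun i => (e i).symm

/-- If the block operator `a = [[a₊, t], [t*, a₋]]` is positive, with `a₊, a₋` trace class and
`t` Hilbert–Schmidt, then `‖t‖₂ ≤ (Tr a)/√2`. -/
theorem stmt1 {E F : Type*} [NormedAddCommGroup E] [InnerProductSpace ℂ E] [CompleteSpace E]
    [NormedAddCommGroup F] [InnerProductSpace ℂ F] [CompleteSpace F]
    {ιE ιF : Type*} (bE : HilbertBasis ιE ℂ E) (bF : HilbertBasis ιF ℂ F)
    (apos : E →L[ℂ] E) (aneg : F →L[ℂ] F) (t : F →L[ℂ] E)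
    (hpos : apos.IsPositive) (hneg : aneg.IsPositive)
    (ha : (blockOp apos t (adjoint t) aneg).IsPositive)
    (htrp : Summable fun i => (inner ℂ (bE i) (apos (bE i)) : ℂ).re)
    (htrn : Summable fun j => (inner ℂ (bF j) (aneg (bF j)) : ℂ).re)
    (ht : Summable fun j => ‖t (bF j)‖ ^ 2) :
    Real.sqrt (∑' j, ‖t (bF j)‖ ^ 2) ≤
      ((∑' i, (inner ℂ (bE i) (apos (bE i)) : ℂ).re) +
        ∑' j, (inner ℂ (bF j) (aneg (bF j)) : ℂ).re) / Real.sqrt 2 := by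
  set P := ∑' i, (inner ℂ (bE i) (apos (bE i)) : ℂ).re with hPdef
  set Q := ∑' j, (inner ℂ (bF j) (aneg (bF j)) : ℂ).re with hQdef
  have hA : ∀ i, 0 ≤ (inner ℂ (bE i) (apos (bE i)) : ℂ).re := fun i => by
    simpa using (Complex.nonneg_iff.mp (hpos.inner_nonneg_right (bE i))).1
  have hB : ∀ j, 0 ≤ (inner ℂ (bF j) (aneg (bF j)) : ℂ).re := fun j => by
    simpa using (Complex.nonneg_iff.mp (hneg.inner_nonneg_right (bF j))).1
  have hP : 0 ≤ P := tsum_nonneg hA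
  have hQ : 0 ≤ Q := tsum_nonneg hB
  have step1 : ∀ j, ‖t (bF j)‖ ^ 2 ≤ P * (inner ℂ (bF j) (aneg (bF j)) : ℂ).re := by
    intro j
    have hps := aux_parseval bE (t (bF j))
    rw [← hps.tsum_eq]
    have hle : ∑' i, ‖(inner ℂ (bE i) (t (bF j)) : ℂ)‖ ^ 2 ≤
        ∑' i, (inner ℂ (bE i) (apos (bE i)) : ℂ).re * (inner ℂ (bF j) (aneg (bF j)) : ℂ).re :=
      Summable.tsum_le_tsum (fun i => aux_key apos aneg t hpos hneg ha (bE i) (bF j))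
        hps.summable (htrp.mul_right _)
    rwa [tsum_mul_right] at hle
  have step2 : ∑' j, ‖t (bF j)‖ ^ 2 ≤ P * Q := by
    have hle := Summable.tsum_le_tsum step1 ht (htrn.mul_left P)
    rwa [tsum_mul_left] at hle
  have h1 : Real.sqrt (∑' j, ‖t (bF j)‖ ^ 2) ≤ Real.sqrt ((P + Q) ^ 2 / 2) := by
    apply Real.sqrt_le_sqrt
    nlinarith [sq_nonneg (P - Q)]
  have h2 : Real.sqrt ((P + Q) ^ 2 / 2) = (P + Q) / Real.sqrt 2 := by
    rw [Real.sqrt_div (sq_nonneg _), Real.sqrt_sq (add_nonneg hP hQ)]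
  rw [h2] at h1
  exact h1
end
end

section
/- Let H be a separable complex Hilbert space with orthogonal decomposition H = H₊ ⊕ H₋ into infinite-dimensional closed subspaces, with orthogonal projections p₊, p₋, and set d = i(p₊ − p₋). Then the set of unitaries u on H with u − 1 of finite rank is unbounded with respect to the restricted norm ‖a‖_res = ‖a‖ + ‖[d,a]‖₂. In particular, for every C > 0 there is a unitary u with u − 1 of finite rank and ‖u‖_res > C. -/
open ContinuousLinearMap

noncomputable section

/-- `T` is a Hilbert–Schmidt operator: `∑ᵢ ‖T eᵢ‖² < ∞` for some Hilbert basis `(eᵢ)`. -/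
def IsHS {H : Type*} [NormedAddCommGroup H] [InnerProductSpace ℂ H]
    (T : H →L[ℂ] H) : Prop :=
  ∃ (ι : Type) (b : HilbertBasis ι ℂ H), Summable fun i => ‖T (b i)‖ ^ 2

/-- `T` is trace class: `T` is a product of two Hilbert–Schmidt operators. -/
def IsTC {H : Type*} [NormedAddCommGroup H] [InnerProductSpace ℂ H]
    (T : H →L[ℂ] H) : Prop :=
  ∃ A B : H →L[ℂ] H, IsHS A ∧ IsHS B ∧ T = A * B

/-- The operator `d = i(p₊ - p₋)` associated to the orthogonal projection `P = p₊`
(so `p₋ = 1 - P`). -/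
def dOp {H : Type*} [NormedAddCommGroup H] [InnerProductSpace ℂ H]
    (P : H →L[ℂ] H) : H →L[ℂ] H :=
  Complex.I • (P - (1 - P))


open Finset

namespace StmtAux

variable {H : Type*} [NormedAddCommGroup H] [InnerProductSpace ℂ H]

local notation "⟪" x ", " y "⟫" => @inner ℂ _ _ x y

variable {κ : Type*} [Fintype κ]

/-- The finite-rank perturbation operator sending `x ↦ x + ∑ⱼ ⟪gⱼ,x⟫ (wⱼ - gⱼ)`. -/
def pertOp (g w : κ → H) : H →L[ℂ] H :=
  1 + ∑ j, (innerSL ℂ (g j)).smulRight (w j - g j)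

lemma pertOp_apply (g w : κ → H) (x : H) :
    pertOp g w x = x + ∑ j, ⟪g j, x⟫ • (w j - g j) := by
  simp [pertOp, ContinuousLinearMap.sum_apply]

end StmtAux

namespace StmtAux2

open StmtAux

variable {H : Type*} [NormedAddCommGroup H] [InnerProductSpace ℂ H]

local notation "⟪" x ", " y "⟫" => @inner ℂ _ _ x y

variable {κ : Type*} [Fintype κ] {g w : κ → H} {σ : Equiv.Perm κ} {ε : κ → ℂ}

section
variable (hg : Orthonormal ℂ g) (hε : ∀ j, (starRingEnd ℂ) (ε j) * ε j = 1)
  (hwd : ∀ j, w j = ε j • g (σ j))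
include hg hε hwd

lemma hw_orthonormal : Orthonormal ℂ w := by
  classical
  rw [orthonormal_iff_ite]
  intro i j
  rw [hwd i, hwd j, inner_smul_left, inner_smul_right,
    orthonormal_iff_ite.mp hg (σ i) (σ j)]
  by_cases h : i = j
  · simp [h, hε j]
  · have : ¬ (σ i = σ j) := fun hc => h (σ.injective hc)
    simp [h, this]

omit hε hwd in
/-- inner product of `g j` with `x - Gx` vanishes. -/
lemma inner_g_resid (j : κ) (x : H) :
    ⟪g j, x - ∑ k, ⟪g k, x⟫ • g k⟫ = 0 := by
  rw [inner_sub_right, hg.inner_right_fintype]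
  simp

lemma inner_w_resid (j : κ) (x : H) :
    ⟪w j, x - ∑ k, ⟪g k, x⟫ • g k⟫ = 0 := by
  rw [hwd j, inner_smul_left, inner_g_resid hg (σ j) x, mul_zero]

/-- the `w`-projection equals the `g`-projection. -/
lemma w_proj_eq (x : H) :
    ∑ k, ⟪w k, x⟫ • w k = ∑ k, ⟪g k, x⟫ • g k := by
  rw [← Equiv.sum_comp σ (fun j => ⟪g j, x⟫ • g j)]
  refine Finset.sum_congr rfl fun k _ => ?_
  rw [hwd k, inner_smul_left, smul_smul, mul_right_comm, hε k, one_mul]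

end

lemma pertOp_apply' (g' w' : κ → H) (x : H) :
    pertOp g' w' x = (x - ∑ k, ⟪g' k, x⟫ • g' k) + ∑ k, ⟪g' k, x⟫ • w' k := by
  rw [pertOp_apply]
  simp only [smul_sub, Finset.sum_sub_distrib]
  abel

section
variable (hg : Orthonormal ℂ g) (hε : ∀ j, (starRingEnd ℂ) (ε j) * ε j = 1)
  (hwd : ∀ j, w j = ε j • g (σ j))
include hg hε hwd

lemma resid_inner_w (j : κ) (x : H) :
    ⟪x - ∑ k, ⟪g k, x⟫ • g k, w j⟫ = 0 := by
  rw [← inner_conj_symm, inner_w_resid hg hε hwd, map_zero]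

omit hε hwd in
lemma resid_inner_g (j : κ) (x : H) :
    ⟪x - ∑ k, ⟪g k, x⟫ • g k, g j⟫ = 0 := by
  rw [← inner_conj_symm, inner_g_resid hg, map_zero]

lemma inner_pert (x y : H) : ⟪pertOp g w x, pertOp g w y⟫ = ⟪x, y⟫ := by
  have hw := hw_orthonormal hg hε hwd
  rw [pertOp_apply' g w x, pertOp_apply' g w y]
  rw [inner_add_left, inner_add_right, inner_add_right]
  have h1 : ⟪x - ∑ k, ⟪g k, x⟫ • g k, ∑ k, ⟪g k, y⟫ • w k⟫ = 0 := by
    rw [inner_sum]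
    refine Finset.sum_eq_zero fun k _ => ?_
    rw [inner_smul_right, resid_inner_w hg hε hwd, mul_zero]
  have h2 : ⟪∑ k, ⟪g k, x⟫ • w k, y - ∑ k, ⟪g k, y⟫ • g k⟫ = 0 := by
    rw [sum_inner]
    refine Finset.sum_eq_zero fun k _ => ?_
    rw [inner_smul_left, inner_w_resid hg hε hwd, mul_zero]
  have h3 : ⟪∑ k, ⟪g k, x⟫ • w k, ∑ k, ⟪g k, y⟫ • w k⟫
      = ∑ k, (starRingEnd ℂ) ⟪g k, x⟫ * ⟪g k, y⟫ :=
    hw.inner_sum _ _ _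
  have h4 : ⟪x - ∑ k, ⟪g k, x⟫ • g k, y - ∑ k, ⟪g k, y⟫ • g k⟫
      = ⟪x, y⟫ - ∑ k, (starRingEnd ℂ) ⟪g k, x⟫ * ⟪g k, y⟫ := by
    rw [inner_sub_right]
    have h5 : ⟪x - ∑ k, ⟪g k, x⟫ • g k, ∑ k, ⟪g k, y⟫ • g k⟫ = 0 := by
      rw [inner_sum]
      refine Finset.sum_eq_zero fun k _ => ?_
      rw [inner_smul_right, resid_inner_g hg, mul_zero]
    rw [h5, sub_zero, inner_sub_left, sum_inner]
    simp only [inner_smul_left]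
  rw [h1, h2, h3, h4]
  ring

lemma inner_w_pert (j : κ) (y : H) : ⟪w j, pertOp g w y⟫ = ⟪g j, y⟫ := by
  have hw := hw_orthonormal hg hε hwd
  rw [pertOp_apply' g w y, inner_add_right, inner_w_resid hg hε hwd, zero_add,
    hw.inner_right_fintype]

lemma inner_g_pertinv (j : κ) (y : H) : ⟪g j, pertOp w g y⟫ = ⟪w j, y⟫ := by
  rw [pertOp_apply' w g y, w_proj_eq hg hε hwd, inner_add_right,
    inner_g_resid hg, zero_add, hg.inner_right_fintype]

lemma pert_right_inv (y : H) : pertOp g w (pertOp w g y) = y := by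
  rw [pertOp_apply g w]
  have h1 : ∀ j, ⟪g j, pertOp w g y⟫ = ⟪w j, y⟫ := fun j => inner_g_pertinv hg hε hwd j y
  calc pertOp w g y + ∑ j, ⟪g j, pertOp w g y⟫ • (w j - g j)
      = pertOp w g y + ∑ j, ⟪w j, y⟫ • (w j - g j) := by
        congr 1; exact Finset.sum_congr rfl fun j _ => by rw [h1 j]
    _ = y + ∑ j, ⟪w j, y⟫ • (g j - w j) + ∑ j, ⟪w j, y⟫ • (w j - g j) := by
        rw [pertOp_apply w g]
    _ = y := by
        rw [add_assoc, ← Finset.sum_add_distrib]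
        have : ∀ j, ⟪w j, y⟫ • (g j - w j) + ⟪w j, y⟫ • (w j - g j) = 0 := fun j => by
          rw [← smul_add]; simp
        simp [this]

end

end StmtAux2

namespace StmtAux3

open StmtAux StmtAux2

variable {H : Type*} [NormedAddCommGroup H] [InnerProductSpace ℂ H]

local notation "⟪" x ", " y "⟫" => @inner ℂ _ _ x y

variable {κ : Type*} [Fintype κ] {g w : κ → H} {σ : Equiv.Perm κ} {ε : κ → ℂ}

lemma pert_mem_unitary [CompleteSpace H] (hg : Orthonormal ℂ g)
    (hε : ∀ j, (starRingEnd ℂ) (ε j) * ε j = 1)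
    (hwd : ∀ j, w j = ε j • g (σ j)) :
    pertOp g w ∈ unitary (H →L[ℂ] H) := by
  set u := pertOp g w with hu
  have h2 : star u * u = 1 := by
    ext x
    refine ext_inner_right ℂ fun y => ?_
    rw [ContinuousLinearMap.mul_apply, ContinuousLinearMap.star_eq_adjoint,
      ContinuousLinearMap.adjoint_inner_left, ContinuousLinearMap.one_apply]
    exact inner_pert hg hε hwd x y
  rw [Unitary.mem_iff]
  refine ⟨h2, ?_⟩
  ext z
  have hz : u (pertOp w g z) = z := pert_right_inv hg hε hwd z
  rw [ContinuousLinearMap.mul_apply, ContinuousLinearMap.one_apply]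
  conv_lhs => rw [← hz]
  rw [← ContinuousLinearMap.mul_apply (star u) u, h2, ContinuousLinearMap.one_apply, hz]

lemma hasSum_parseval {ι : Type*} (b : HilbertBasis ι ℂ H) (z : H) :
    HasSum (fun i => ‖⟪z, b i⟫‖ ^ 2) (‖z‖ ^ 2) := by
  have h := (b.hasSum_inner_mul_inner z z).mapL Complex.reCLM
  have h1 : ∀ i, (⟪z, b i⟫ * ⟪b i, z⟫).re = ‖⟪z, b i⟫‖ ^ 2 := by
    intro i
    rw [← inner_conj_symm (b i) z, Complex.mul_conj]
    rw [Complex.ofReal_re, Complex.normSq_eq_norm_sq]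
  have h2 : (⟪z, z⟫).re = ‖z‖ ^ 2 := by
    simpa using inner_self_eq_norm_sq (𝕜 := ℂ) z
  simpa only [Complex.reCLM_apply, h1, h2] using h

lemma summable_finiteRank {ι M : Type*} [Fintype M] (b : HilbertBasis ι ℂ H)
    (a c : M → H) : Summable fun i => ‖∑ m, ⟪a m, b i⟫ • c m‖ ^ 2 := by
  have key : ∀ i, ‖∑ m, ⟪a m, b i⟫ • c m‖ ^ 2
      ≤ (Fintype.card M : ℝ) * ∑ m, ‖c m‖ ^ 2 * ‖⟪a m, b i⟫‖ ^ 2 := by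
    intro i
    have h1 : ‖∑ m, ⟪a m, b i⟫ • c m‖ ≤ ∑ m, ‖⟪a m, b i⟫‖ * ‖c m‖ := by
      refine (norm_sum_le _ _).trans_eq ?_
      simp [norm_smul]
    calc ‖∑ m, ⟪a m, b i⟫ • c m‖ ^ 2 ≤ (∑ m, ‖⟪a m, b i⟫‖ * ‖c m‖) ^ 2 := by
          exact pow_le_pow_left₀ (norm_nonneg _) h1 2
      _ ≤ (Fintype.card M : ℝ) * ∑ m, (‖⟪a m, b i⟫‖ * ‖c m‖) ^ 2 := by
          have := sq_sum_le_card_mul_sum_sq (s := Finset.univ)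
            (f := fun m : M => ‖⟪a m, b i⟫‖ * ‖c m‖)
          simpa using this
      _ = (Fintype.card M : ℝ) * ∑ m, ‖c m‖ ^ 2 * ‖⟪a m, b i⟫‖ ^ 2 := by
          congr 1
          exact Finset.sum_congr rfl fun m _ => by ring
  have hsummable : Summable fun i =>
      (Fintype.card M : ℝ) * ∑ m, ‖c m‖ ^ 2 * ‖⟪a m, b i⟫‖ ^ 2 := by
    apply Summable.mul_left
    apply summable_sum
    intro m _
    apply Summable.mul_left
    have := (b.orthonormal.inner_products_summable (x := a m))
    exact this.congr fun i => by rw [norm_inner_symm]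
  exact Summable.of_nonneg_of_le (fun i => sq_nonneg _) key hsummable

lemma exists_orthonormal_fixed (Q : H →L[ℂ] H) (hQ2 : Q * Q = Q)
    (hinf : ¬ FiniteDimensional ℂ (LinearMap.range (Q : H →ₗ[ℂ] H))) (N : ℕ) :
    ∃ e : Fin N → H, Orthonormal ℂ e ∧ ∀ k, Q (e k) = e k := by
  set V := LinearMap.range (Q : H →ₗ[ℂ] H) with hV
  have hr : (N : Cardinal) ≤ Module.rank ℂ V := by
    refine le_trans (Cardinal.nat_lt_aleph0 N).le ?_
    by_contra hlt
    exact hinf (Module.rank_lt_aleph0_iff.mp (lt_of_not_ge hlt))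
  obtain ⟨v, hv⟩ := exists_linearIndependent_of_le_rank hr
  haveI : WellFoundedLT (Fin N) := Finite.to_wellFoundedLT
  have ho : Orthonormal ℂ (InnerProductSpace.gramSchmidtNormed ℂ v) :=
    InnerProductSpace.gramSchmidtNormed_orthonormal hv
  refine ⟨fun k => ((InnerProductSpace.gramSchmidtNormed ℂ v k : V) : H), ?_, ?_⟩
  · exact ho.comp_linearIsometry V.subtypeₗᵢ
  · intro k
    obtain ⟨y, hy⟩ := (InnerProductSpace.gramSchmidtNormed ℂ v k).2
    simp only [ContinuousLinearMap.coe_coe] at hy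
    have : Q (((InnerProductSpace.gramSchmidtNormed ℂ v k : V) : H)) = Q (Q y) := by rw [hy]
    rw [this, ← ContinuousLinearMap.mul_apply, hQ2, hy]

end StmtAux3


local notation "⟪" x ", " y "⟫" => @inner ℂ _ _ x y

open StmtAux StmtAux2 StmtAux3 in
/-- The group of unitaries `u` with `u - 1` of finite rank is unbounded in the restricted norm
`‖u‖_res = ‖u‖ + ‖[d,u]‖₂`. -/
theorem stmt4 {H : Type*} [NormedAddCommGroup H] [InnerProductSpace ℂ H] [CompleteSpace H]
    (P : H →L[ℂ] H) (hP : IsSelfAdjoint P) (hP2 : P * P = P)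
    (hinfp : ¬ FiniteDimensional ℂ (LinearMap.range (P : H →ₗ[ℂ] H)))
    (hinfm : ¬ FiniteDimensional ℂ (LinearMap.range ((1 - P : H →L[ℂ] H) : H →ₗ[ℂ] H)))
    {ι : Type*} (b : HilbertBasis ι ℂ H) :
    ∀ C : ℝ, 0 < C → ∃ u : H →L[ℂ] H, u ∈ unitary (H →L[ℂ] H) ∧
      FiniteDimensional ℂ (LinearMap.range ((u - 1 : H →L[ℂ] H) : H →ₗ[ℂ] H)) ∧
      C < ‖u‖ + Real.sqrt (∑' i, ‖(dOp P * u - u * dOp P) (b i)‖ ^ 2) := by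
  intro C hC
  classical
  set N : ℕ := ⌈C ^ 2⌉₊ + 1 with hN
  -- orthonormal families in the ranges
  have hQ2 : (1 - P) * (1 - P) = 1 - P := by
    rw [sub_mul, mul_sub, mul_sub, mul_one, one_mul, hP2]
    abel
  obtain ⟨e, he, hPe⟩ := exists_orthonormal_fixed P hP2 hinfp N
  obtain ⟨f, hf, hQf⟩ := exists_orthonormal_fixed (1 - P) hQ2 hinfm N
  have hPf : ∀ k, P (f k) = 0 := by
    intro k
    have h := hQf k
    simp only [ContinuousLinearMap.sub_apply, ContinuousLinearMap.one_apply] at h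
    exact sub_eq_self.mp h
  have hadj : ContinuousLinearMap.adjoint P = P := by
    rw [← ContinuousLinearMap.star_eq_adjoint]; exact hP
  have hPsym : ∀ x y : H, ⟪P x, y⟫ = ⟪x, P y⟫ := by
    intro x y
    nth_rewrite 1 [← hadj]
    exact ContinuousLinearMap.adjoint_inner_left P y x
  have hef : ∀ k l, ⟪e k, f l⟫ = 0 := by
    intro k l
    conv_lhs => rw [← hPe k]
    rw [hPsym, hPf l, inner_zero_right]
  -- the data for the perturbation
  set g : Fin N ⊕ Fin N → H := Sum.elim e f with hgdef
  have hg : Orthonormal ℂ g := by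
    rw [orthonormal_iff_ite]
    have he' := orthonormal_iff_ite.mp he
    have hf' := orthonormal_iff_ite.mp hf
    rintro (k | k) (l | l)
    · simpa [hgdef] using he' k l
    · simpa [hgdef] using hef k l
    · have : ⟪f k, e l⟫ = 0 := by rw [← inner_conj_symm, hef l k, map_zero]
      simpa [hgdef] using this
    · simpa [hgdef] using hf' k l
  set σ : Equiv.Perm (Fin N ⊕ Fin N) := Equiv.sumComm (Fin N) (Fin N) with hσdef
  set ε : Fin N ⊕ Fin N → ℂ := Sum.elim (fun _ => (1 : ℂ)) (fun _ => (-1 : ℂ)) with hεdef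
  have hε : ∀ j, (starRingEnd ℂ) (ε j) * ε j = 1 := by
    rintro (k | k) <;> simp [hεdef]
  set w : Fin N ⊕ Fin N → H := fun j => ε j • g (σ j) with hwdef
  have hwd : ∀ j, w j = ε j • g (σ j) := fun j => rfl
  set u : H →L[ℂ] H := pertOp g w with hudef
  refine ⟨u, pert_mem_unitary hg hε hwd, ?_, ?_⟩
  · -- finite rank
    have hu1 : u - 1 = ∑ j, (innerSL ℂ (g j)).smulRight (w j - g j) := by
      rw [hudef, pertOp, add_sub_cancel_left]
    have hle : LinearMap.range ((u - 1 : H →L[ℂ] H) : H →ₗ[ℂ] H)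
        ≤ Submodule.span ℂ (Set.range fun j => w j - g j) := by
      rintro y ⟨x, rfl⟩
      rw [hu1]
      simp only [ContinuousLinearMap.coe_coe, ContinuousLinearMap.coe_sum', Finset.sum_apply,
        ContinuousLinearMap.smulRight_apply, innerSL_apply_apply]
      exact Submodule.sum_mem _ fun j _ =>
        Submodule.smul_mem _ _ (Submodule.subset_span ⟨j, rfl⟩)
    haveI := FiniteDimensional.span_of_finite ℂ (Set.finite_range fun j => w j - g j)
    exact Submodule.finiteDimensional_of_le hle
  · -- the norm bound
    have hed : ∀ (k) (z : H), ⟪e k, dOp P z⟫ = Complex.I * ⟪e k, z⟫ := by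
      intro k z
      have h1 : ⟪e k, P z⟫ = ⟪e k, z⟫ := by rw [← hPsym, hPe]
      simp only [dOp, ContinuousLinearMap.smul_apply, ContinuousLinearMap.sub_apply,
        ContinuousLinearMap.one_apply, inner_smul_right, inner_sub_right, h1]
      ring
    have hfd : ∀ (k) (z : H), ⟪f k, dOp P z⟫ = -(Complex.I * ⟪f k, z⟫) := by
      intro k z
      have h1 : ⟪f k, P z⟫ = 0 := by rw [← hPsym, hPf, inner_zero_left]
      simp only [dOp, ContinuousLinearMap.smul_apply, ContinuousLinearMap.sub_apply,
        ContinuousLinearMap.one_apply, inner_smul_right, inner_sub_right, h1]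
      ring
    have hfu : ∀ (k) (z : H), ⟪f k, u z⟫ = ⟪e k, z⟫ := by
      intro k z
      have h := inner_w_pert hg hε hwd (Sum.inl k) z
      simpa [hudef, hwdef, hεdef, hσdef, hgdef] using h
    set T : H →L[ℂ] H := dOp P * u - u * dOp P with hTdef
    have hfT : ∀ (k) (z : H), ⟪f k, T z⟫ = -(2 * Complex.I) * ⟪e k, z⟫ := by
      intro k z
      have : T z = dOp P (u z) - u (dOp P z) := by
        simp [hTdef, ContinuousLinearMap.mul_apply]
      rw [this, inner_sub_right, hfd, hfu, hfu, hed]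
      ring
    have hfT' : ∀ (k) (i : ι), ‖⟪f k, T (b i)⟫‖ ^ 2 = 4 * ‖⟪e k, b i⟫‖ ^ 2 := by
      intro k i
      rw [hfT, norm_mul]
      have : ‖-(2 * Complex.I)‖ = 2 := by simp
      rw [this, mul_pow]
      norm_num
    have hk4 : ∀ k, HasSum (fun i => ‖⟪f k, T (b i)⟫‖ ^ 2) 4 := by
      intro k
      have h := (hasSum_parseval b (e k)).mul_left 4
      have hek : ‖e k‖ = 1 := he.1 k
      rw [hek, one_pow, mul_one] at h
      exact h.congr_fun fun i => hfT' k i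
    -- summability of the full Hilbert-Schmidt sum
    have had : ∀ (x z : H),
        ⟪(-Complex.I) • ((2 : ℂ) • P x - x), z⟫ = ⟪x, dOp P z⟫ := by
      intro x z
      have h1 : ⟪P x, z⟫ = ⟪x, P z⟫ := hPsym x z
      simp only [inner_smul_left, inner_sub_left, inner_smul_right, dOp,
        ContinuousLinearMap.smul_apply, ContinuousLinearMap.sub_apply,
        ContinuousLinearMap.one_apply, inner_sub_right, h1, Complex.conj_I, map_neg,
        Complex.conj_ofNat]
      ring
    set a : (Fin N ⊕ Fin N) ⊕ (Fin N ⊕ Fin N) → H :=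
      Sum.elim g (fun j => (-Complex.I) • ((2 : ℂ) • P (g j) - g j)) with hadef
    set c : (Fin N ⊕ Fin N) ⊕ (Fin N ⊕ Fin N) → H :=
      Sum.elim (fun j => dOp P (w j - g j)) (fun j => g j - w j) with hcdef
    have hTform : ∀ z : H, T z = ∑ m, ⟪a m, z⟫ • c m := by
      intro z
      have h1 : T z = dOp P (u z) - u (dOp P z) := by
        simp [hTdef, ContinuousLinearMap.mul_apply]
      rw [h1, pertOp_apply g w z, pertOp_apply g w (dOp P z), map_add, map_sum,
        hadef, hcdef]
      conv_rhs => rw [Fintype.sum_sum_type]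
      simp only [Sum.elim_inl, Sum.elim_inr, map_smul, had]
      have hneg : ∀ j, ⟪g j, dOp P z⟫ • (g j - w j)
          = -(⟪g j, dOp P z⟫ • (w j - g j)) := fun j => by rw [← smul_neg, neg_sub]
      simp only [hneg, Finset.sum_neg_distrib]
      abel
    have hSum : Summable fun i => ‖T (b i)‖ ^ 2 := by
      refine (summable_finiteRank b a c).congr fun i => ?_
      rw [← hTform (b i)]
    have hls : Summable fun i => ∑ k, ‖⟪f k, T (b i)⟫‖ ^ 2 :=
      summable_sum fun k _ => (hk4 k).summable
    have hlow : ∀ i, ∑ k, ‖⟪f k, T (b i)⟫‖ ^ 2 ≤ ‖T (b i)‖ ^ 2 := fun i =>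
      hf.sum_inner_products_le (T (b i))
    have h4N : (4 * N : ℝ) ≤ ∑' i, ‖T (b i)‖ ^ 2 := by
      have h1 : ∑' i, (∑ k, ‖⟪f k, T (b i)⟫‖ ^ 2) = ∑ k : Fin N, (4 : ℝ) := by
        rw [Summable.tsum_finsetSum fun k _ => (hk4 k).summable]
        exact Finset.sum_congr rfl fun k _ => (hk4 k).tsum_eq
      calc (4 * N : ℝ) = ∑ _k : Fin N, (4 : ℝ) := by simp [mul_comm]
        _ = ∑' i, ∑ k, ‖⟪f k, T (b i)⟫‖ ^ 2 := h1.symm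
        _ ≤ ∑' i, ‖T (b i)‖ ^ 2 := Summable.tsum_le_tsum hlow hls hSum
    have hCsq : C ^ 2 < 4 * N := by
      have h1 : C ^ 2 ≤ (⌈C ^ 2⌉₊ : ℝ) := Nat.le_ceil _
      have h2 : ((⌈C ^ 2⌉₊ : ℝ)) < N := by
        rw [hN]; push_cast; linarith
      have h3 : (N : ℝ) ≤ 4 * N := by nlinarith [Nat.cast_nonneg (α := ℝ) N]
      linarith
    calc C = Real.sqrt (C ^ 2) := (Real.sqrt_sq hC.le).symm
      _ < Real.sqrt (4 * N) := Real.sqrt_lt_sqrt (sq_nonneg C) hCsq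
      _ ≤ Real.sqrt (∑' i, ‖T (b i)‖ ^ 2) := Real.sqrt_le_sqrt h4N
      _ ≤ ‖u‖ + Real.sqrt (∑' i, ‖T (b i)‖ ^ 2) := le_add_of_nonneg_left (norm_nonneg u)
end
end

section
/- For every n ≥ 1 there exists a skew-adjoint finite-rank operator ρₙ on H = H₊ ⊕ H₋ (with off-diagonal blocks aₙ and −aₙ*, where aₙ = (π/2)vₙ for a partial isometry vₙ : H₋ → H₊ of rank n) such that exp(ρₙ) is unitary, exp(ρₙ) − 1 has finite rank, and ‖[d, exp(ρₙ)]‖₂ ≥ √n. -/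
open ContinuousLinearMap

noncomputable section

open scoped InnerProductSpace

lemma exp_cube {A : Type*} [NormedRing A] [NormedAlgebra ℂ A] [CompleteSpace A]
    (s : A) (hs : s ^ 3 = -s) (c : ℂ) :
    NormedSpace.exp (c • s) = 1 + Complex.sin c • s + (1 - Complex.cos c) • s ^ 2 := by
  have hs3' : s * s ^ 2 = -s := by
    rw [← pow_succ', show (2:ℕ)+1 = 3 from rfl, hs]
  have hs22 : s ^ 2 * s ^ 2 = -(s ^ 2) := by
    rw [← pow_add, show (2:ℕ)+2 = 3+1 from rfl, pow_succ, hs, neg_mul, ← pow_two]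
  have podd : ∀ m : ℕ, s ^ (2 * m + 1) = ((-1 : ℂ)) ^ m • s := by
    intro m
    induction m with
    | zero => simp
    | succ m ih =>
      have h1 : 2 * (m + 1) + 1 = (2 * m + 1) + 2 := by ring
      rw [h1, pow_add, ih, smul_mul_assoc, hs3', pow_succ]
      module
  have peven : ∀ m : ℕ, s ^ (2 * m + 2) = ((-1 : ℂ)) ^ m • s ^ 2 := by
    intro m
    induction m with
    | zero => simp
    | succ m ih =>
      have h1 : 2 * (m + 1) + 2 = (2 * m + 2) + 2 := by ring
      rw [h1, pow_add, ih, smul_mul_assoc, hs22, pow_succ]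
      module
  set f : ℕ → A := fun k => ((Nat.factorial k : ℂ))⁻¹ • (c • s) ^ k with hf
  have hsum : HasSum f ((1 + (1 - Complex.cos c) • s ^ 2) + Complex.sin c • s) := by
    apply HasSum.even_add_odd
    · -- even part
      have hcos := Complex.hasSum_cos c
      have h1 : HasSum (fun k : ℕ => (-1 : ℂ) ^ (k + 1) * c ^ (2 * (k + 1)) / ((2 * (k + 1)).factorial : ℂ))
          (Complex.cos c - 1) := by
        have h0 := (hasSum_nat_add_iff'
          (f := fun n : ℕ => (-1 : ℂ) ^ n * c ^ (2 * n) / ((2 * n).factorial : ℂ)) 1).mpr hcos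
        convert! h0 using 1
        simp
      have h2 := (h1.neg.smul_const (s ^ 2))
      apply (hasSum_nat_add_iff' (f := fun k : ℕ => f (2 * k)) 1).mp
      convert! h2 using 1
      · funext k
        have e2 : 2 * (k + 1) = 2 * k + 2 := by ring
        rw [e2]
        simp only [hf, smul_pow, peven, smul_smul]
        congr 1
        rw [pow_succ]
        ring
      · simp only [Finset.sum_range_one, hf]
        norm_num
    · -- odd part
      have hsin := (Complex.hasSum_sin c).smul_const s
      convert hsin using 1
      funext k
      simp only [hf, smul_pow, podd, smul_smul]
      congr 1
      ring
  rw [NormedSpace.exp_eq_tsum ℂ]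
  show (∑' k : ℕ, ((Nat.factorial k : ℂ))⁻¹ • (c • s) ^ k) = _
  exact hsum.tsum_eq.trans (by abel)

lemma exists_orthonormal_in {H : Type*} [NormedAddCommGroup H] [InnerProductSpace ℂ H]
    [CompleteSpace H] (K : Submodule ℂ H) (hKc : IsClosed (K : Set H))
    (hK : ¬ FiniteDimensional ℂ K) (n : ℕ) :
    ∃ e : Fin n → H, Orthonormal ℂ e ∧ ∀ j, e j ∈ K := by
  classical
  haveI : CompleteSpace K := hKc.completeSpace_coe
  obtain ⟨w, bw, hbw⟩ := exists_hilbertBasis ℂ K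
  haveI : Infinite w := by
    rw [Set.infinite_coe_iff]
    intro hfin
    haveI : Finite w := hfin
    apply hK
    have hd := bw.dense_span
    rw [hbw] at hd
    set S := Submodule.span ℂ (Set.range (Subtype.val : w → K)) with hS
    haveI : FiniteDimensional ℂ S := FiniteDimensional.span_of_finite ℂ (Set.finite_range _)
    have hcl : S.topologicalClosure = S := by
      apply le_antisymm
      · exact S.topologicalClosure_minimal le_rfl S.closed_of_finiteDimensional
      · exact S.le_topologicalClosure
    rw [hcl] at hd
    haveI : FiniteDimensional ℂ (⊤ : Submodule ℂ K) := hd ▸ inferInstance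
    exact (Submodule.topEquiv : (⊤ : Submodule ℂ K) ≃ₗ[ℂ] K).finiteDimensional
  have u : Fin n ↪ w := (Fin.valEmbedding.trans (Infinite.natEmbedding w))
  refine ⟨fun j => ((bw (u j) : K) : H), ?_, fun j => SetLike.coe_mem _⟩
  have ho := bw.orthonormal.comp u u.injective
  rw [orthonormal_iff_ite] at ho ⊢
  intro i j
  have := ho i j
  rwa [Submodule.coe_inner] at this

set_option maxHeartbeats 1000000 in
/-- For every `n ≥ 1` there is a skew-adjoint finite-rank `ρₙ = (π/2)(vₙ - vₙ*)`, built from a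
rank-`n` partial isometry `vₙ : H₋ → H₊`, such that `exp ρₙ` is unitary, `exp ρₙ - 1` has finite
rank, and `‖[d, exp ρₙ]‖₂ ≥ √n`. -/
theorem stmt5 {H : Type*} [NormedAddCommGroup H] [InnerProductSpace ℂ H] [CompleteSpace H]
    (P : H →L[ℂ] H) (hP : IsSelfAdjoint P) (hP2 : P * P = P)
    (hinfp : ¬ FiniteDimensional ℂ (LinearMap.range (P : H →ₗ[ℂ] H)))
    (hinfm : ¬ FiniteDimensional ℂ (LinearMap.range ((1 - P : H →L[ℂ] H) : H →ₗ[ℂ] H)))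
    {ι : Type*} (b : HilbertBasis ι ℂ H) (n : ℕ) (hn : 1 ≤ n) :
    ∃ ρ v : H →L[ℂ] H,
      v ∘L adjoint v ∘L v = v ∧
      P * v * (1 - P) = v ∧
      FiniteDimensional ℂ (LinearMap.range (v : H →ₗ[ℂ] H)) ∧
      Module.finrank ℂ (LinearMap.range (v : H →ₗ[ℂ] H)) = n ∧
      ρ = ((Real.pi / 2 : ℝ) : ℂ) • (v - adjoint v) ∧
      star ρ = -ρ ∧
      FiniteDimensional ℂ (LinearMap.range (ρ : H →ₗ[ℂ] H)) ∧
      NormedSpace.exp ρ ∈ unitary (H →L[ℂ] H) ∧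
      FiniteDimensional ℂ (LinearMap.range ((NormedSpace.exp ρ - 1 : H →L[ℂ] H) : H →ₗ[ℂ] H)) ∧
      Real.sqrt n ≤ Real.sqrt
        (∑' i, ‖(dOp P * NormedSpace.exp ρ - NormedSpace.exp ρ * dOp P) (b i)‖ ^ 2) := by
  classical
  -- the ranges are closed
  have hidem : ∀ (Q : H →L[ℂ] H), Q * Q = Q →
      LinearMap.range (Q : H →ₗ[ℂ] H) = LinearMap.ker ((1 - Q : H →L[ℂ] H) : H →ₗ[ℂ] H) := by
    intro Q hQ
    ext x
    constructor
    · rintro ⟨y, rfl⟩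
      have := DFunLike.congr_fun hQ y
      simp only [ContinuousLinearMap.mul_apply] at this
      simp [LinearMap.mem_ker, this]
    · intro hx
      simp only [LinearMap.mem_ker, ContinuousLinearMap.coe_coe, ContinuousLinearMap.coe_sub', Pi.sub_apply,
        ContinuousLinearMap.one_apply, sub_eq_zero] at hx
      exact ⟨x, hx.symm⟩
  have h1P : (1 - P) * (1 - P) = 1 - P := by
    rw [sub_mul, one_mul, mul_sub, mul_one, hP2]; abel
  have hclp : IsClosed ((LinearMap.range (P : H →ₗ[ℂ] H) : Submodule ℂ H) : Set H) := by
    rw [hidem P hP2]; exact ContinuousLinearMap.isClosed_ker (1 - P)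
  have hclm : IsClosed ((LinearMap.range ((1 - P : H →L[ℂ] H) : H →ₗ[ℂ] H) : Submodule ℂ H) : Set H) := by
    rw [hidem (1 - P) h1P]; exact ContinuousLinearMap.isClosed_ker (1 - (1 - P))
  obtain ⟨e, he, heK⟩ := exists_orthonormal_in (LinearMap.range (P : H →ₗ[ℂ] H)) hclp hinfp n
  obtain ⟨f, hf, hfK⟩ := exists_orthonormal_in (LinearMap.range ((1 - P : H →L[ℂ] H) : H →ₗ[ℂ] H)) hclm hinfm n
  -- basic facts about e, f
  have hPe : ∀ j, P (e j) = e j := by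
    intro j
    obtain ⟨y, hy⟩ := heK j
    have := DFunLike.congr_fun hP2 y
    simp only [ContinuousLinearMap.mul_apply] at this
    rw [← hy]; exact this
  have hPf : ∀ j, P (f j) = 0 := by
    intro j
    obtain ⟨y, hy⟩ := hfK j
    have h2 := DFunLike.congr_fun hP2 y
    simp only [ContinuousLinearMap.mul_apply] at h2
    rw [← hy]
    simp only [ContinuousLinearMap.coe_coe, ContinuousLinearMap.coe_sub', Pi.sub_apply, ContinuousLinearMap.one_apply,
      map_sub, h2, sub_self]
  have hPa : ContinuousLinearMap.adjoint P = P := hP.adjoint_eq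
  have hinner : ∀ x y : H, ⟪P x, y⟫_ℂ = ⟪x, P y⟫_ℂ := by
    intro x y
    conv_lhs => rw [← hPa]
    exact ContinuousLinearMap.adjoint_inner_left P y x
  have hef : ∀ i j, ⟪e i, f j⟫_ℂ = 0 := by
    intro i j
    rw [← hPe i, hinner, hPf, inner_zero_right]
  have hfe : ∀ i j, ⟪f i, e j⟫_ℂ = 0 := by
    intro i j
    rw [← inner_conj_symm, hef, map_zero]
  have he' : ∀ i j, ⟪e i, e j⟫_ℂ = if i = j then 1 else 0 := orthonormal_iff_ite.mp he
  have hf' : ∀ i j, ⟪f i, f j⟫_ℂ = if i = j then 1 else 0 := orthonormal_iff_ite.mp hf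
  -- the operators
  set v : H →L[ℂ] H := ∑ j : Fin n, (innerSL ℂ (f j)).smulRight (e j) with hvdef
  set w : H →L[ℂ] H := ∑ j : Fin n, (innerSL ℂ (e j)).smulRight (f j) with hwdef
  have hva : ∀ x, v x = ∑ j, ⟪f j, x⟫_ℂ • e j := by
    intro x
    simp [hvdef, ContinuousLinearMap.sum_apply]
  have hwa : ∀ x, w x = ∑ j, ⟪e j, x⟫_ℂ • f j := by
    intro x
    simp [hwdef, ContinuousLinearMap.sum_apply]
  have hve : ∀ j, v (e j) = 0 := by intro j; rw [hva]; simp [hfe]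
  have hvf : ∀ j, v (f j) = e j := by intro j; rw [hva]; simp [hf']
  have hwe : ∀ j, w (e j) = f j := by intro j; rw [hwa]; simp [he']
  have hwf : ∀ j, w (f j) = 0 := by intro j; rw [hwa]; simp [hef]
  have hvF : ∀ c : Fin n → ℂ, v (∑ j, c j • f j) = ∑ j, c j • e j := by
    intro c; rw [map_sum]; simp [hvf]
  have hvE : ∀ c : Fin n → ℂ, v (∑ j, c j • e j) = 0 := by
    intro c; rw [map_sum]; simp [hve]
  have hwE : ∀ c : Fin n → ℂ, w (∑ j, c j • e j) = ∑ j, c j • f j := by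
    intro c; rw [map_sum]; simp [hwe]
  have hwF : ∀ c : Fin n → ℂ, w (∑ j, c j • f j) = 0 := by
    intro c; rw [map_sum]; simp [hwf]
  have hadjv : ContinuousLinearMap.adjoint v = w := by
    refine ((ContinuousLinearMap.eq_adjoint_iff w v).mpr ?_).symm
    intro x y
    rw [hwa, hva, sum_inner, inner_sum]
    refine Finset.sum_congr rfl fun j _ => ?_
    rw [inner_smul_left, inner_smul_right, inner_conj_symm, mul_comm]
  -- pointwise operator composition facts
  have hvvx : ∀ x, v (v x) = 0 := by intro x; rw [hva x]; exact hvE _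
  have hwwx : ∀ x, w (w x) = 0 := by intro x; rw [hwa x]; exact hwF _
  have hvwx : ∀ x, v (w x) = ∑ j, ⟪e j, x⟫_ℂ • e j := by intro x; rw [hwa x]; exact hvF _
  have hwvx : ∀ x, w (v x) = ∑ j, ⟪f j, x⟫_ℂ • f j := by intro x; rw [hva x]; exact hwE _
  set s : H →L[ℂ] H := v - w with hsdef
  have hsapp : ∀ y, s y = v y - w y := fun y => rfl
  have hs3 : s ^ 3 = -s := by
    ext x
    have h0 : (s ^ 3) x = s (s (s x)) := by
      rw [pow_succ, pow_two]; rfl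
    have h2 : s (s x) = -((∑ j, ⟪e j, x⟫_ℂ • e j) + ∑ j, ⟪f j, x⟫_ℂ • f j) := by
      rw [hsapp, hsapp x, map_sub, map_sub, hvvx, hwwx, hvwx, hwvx]
      abel
    have h3 : s (s (s x)) = -(s x) := by
      rw [hsapp (s (s x)), h2, map_neg, map_neg, map_add, map_add, hvE, hwF, hvF, hwE,
        hsapp x, hva, hwa]
      abel
    rw [h0, h3]
    simp
  -- operator-level identities
  have hvv0 : v * v = 0 := by ext x; exact hvvx x
  have hww0 : w * w = 0 := by ext x; exact hwwx x
  have hPv : P * v = v := by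
    ext x
    show P (v x) = v x
    rw [hva, map_sum]
    simp [hPe]
  have hvP : v * P = 0 := by
    ext x
    show v (P x) = 0
    rw [hva]
    have : ∀ j, ⟪f j, P x⟫_ℂ = 0 := by
      intro j; rw [← hinner, hPf, inner_zero_left]
    simp [this]
  have hPw : P * w = 0 := by
    ext x
    show P (w x) = 0
    rw [hwa, map_sum]
    simp [hPf]
  have hwP : w * P = w := by
    ext x
    show w (P x) = w x
    rw [hwa, hwa]
    refine Finset.sum_congr rfl fun j _ => ?_
    rw [← hinner, hPe]
  set D : H →L[ℂ] H := P - (1 - P) with hDdef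
  have hDv : D * v = v := by
    rw [hDdef]
    simp only [sub_mul, one_mul, hPv]
    abel
  have hvD : v * D = -v := by
    rw [hDdef]
    simp only [mul_sub, mul_one, hvP]
    abel
  have hDw : D * w = -w := by
    rw [hDdef]
    simp only [sub_mul, one_mul, hPw]
    abel
  have hwD : w * D = w := by
    rw [hDdef]
    simp only [mul_sub, mul_one, hwP]
    abel
  have hDs : D * s - s * D = (2 : ℂ) • (v + w) := by
    have h1 : D * s = v + w := by rw [hsdef, mul_sub, hDv, hDw]; abel
    have h2 : s * D = -(v + w) := by rw [hsdef, sub_mul, hvD, hwD]; abel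
    rw [h1, h2]
    module
  have hss : s * s = -(v * w + w * v) := by
    rw [hsdef, sub_mul, mul_sub, mul_sub, hvv0, hww0]
    abel
  have hDss : D * (s * s) = (s * s) * D := by
    rw [hss, mul_neg, neg_mul, mul_add, add_mul,
      show D * (v * w) = v * w from by rw [← mul_assoc, hDv],
      show (v * w) * D = v * w from by rw [mul_assoc, hwD],
      show D * (w * v) = -(w * v) from by rw [← mul_assoc, hDw, neg_mul],
      show (w * v) * D = -(w * v) from by rw [mul_assoc, hvD, mul_neg]]
  set ρ : H →L[ℂ] H := ((Real.pi / 2 : ℝ) : ℂ) • s with hρdef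
  have hexpU : NormedSpace.exp ρ = 1 + s + s ^ 2 := by
    rw [hρdef, exp_cube s hs3]
    rw [← Complex.ofReal_sin, ← Complex.ofReal_cos, Real.sin_pi_div_two, Real.cos_pi_div_two]
    norm_num
  have hT : dOp P * NormedSpace.exp ρ - NormedSpace.exp ρ * dOp P
      = (2 * Complex.I) • (v + w) := by
    rw [hexpU]
    unfold dOp
    rw [← hDdef, pow_two, smul_mul_assoc, mul_smul_comm, ← smul_sub]
    have hmid : D * (1 + s + s * s) - (1 + s + s * s) * D
        = (D * s - s * D) + (D * (s * s) - (s * s) * D) := by noncomm_ring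
    rw [hmid, hDs, hDss, sub_self, add_zero, smul_smul]
    module
  -- membership submodule
  set Sp : Submodule ℂ H := Submodule.span ℂ (Set.range e ∪ Set.range f) with hSpdef
  haveI : FiniteDimensional ℂ Sp := by
    rw [hSpdef]
    exact FiniteDimensional.span_of_finite ℂ ((Set.finite_range e).union (Set.finite_range f))
  have hvmem : ∀ y, v y ∈ Sp := by
    intro y
    rw [hva]
    exact Submodule.sum_mem _ fun j _ =>
      Submodule.smul_mem _ _ (Submodule.subset_span (Or.inl ⟨j, rfl⟩))
  have hwmem : ∀ y, w y ∈ Sp := by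
    intro y
    rw [hwa]
    exact Submodule.sum_mem _ fun j _ =>
      Submodule.smul_mem _ _ (Submodule.subset_span (Or.inr ⟨j, rfl⟩))
  have hsmem : ∀ y, s y ∈ Sp := fun y => by
    rw [hsapp]; exact sub_mem (hvmem y) (hwmem y)
  refine ⟨ρ, v, ?_, ?_, ?_, ?_, ?_, ?_, ?_, ?_, ?_, ?_⟩
  · -- v ∘L adjoint v ∘L v = v
    rw [hadjv]
    ext x
    show v (w (v x)) = v x
    rw [hwvx, hvF, hva]
  · -- P * v * (1 - P) = v
    rw [hPv, mul_sub, mul_one, hvP, sub_zero]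
  · -- finite rank v
    have hle : LinearMap.range (v : H →ₗ[ℂ] H) ≤ Sp := by
      rintro x ⟨y, rfl⟩
      exact hvmem y
    exact Submodule.finiteDimensional_of_le hle
  · -- finrank = n
    have hrange : LinearMap.range (v : H →ₗ[ℂ] H) = Submodule.span ℂ (Set.range e) := by
      apply le_antisymm
      · rintro x ⟨y, rfl⟩
        show v y ∈ _
        rw [hva]
        exact Submodule.sum_mem _ fun j _ =>
          Submodule.smul_mem _ _ (Submodule.subset_span ⟨j, rfl⟩)
      · rw [Submodule.span_le]
        rintro x ⟨j, rfl⟩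
        exact ⟨f j, hvf j⟩
    rw [hrange, finrank_span_eq_card he.linearIndependent]
    simp
  · -- ρ = c • (v - adjoint v)
    rw [hadjv, hρdef, hsdef]
  · -- star ρ = -ρ
    rw [hρdef, star_smul, hsdef, star_sub,
      ContinuousLinearMap.star_eq_adjoint, ContinuousLinearMap.star_eq_adjoint, hadjv,
      ← hadjv, ContinuousLinearMap.adjoint_adjoint, hadjv]
    simp [Complex.conj_ofReal]
    module
  · -- finite rank ρ
    have hle : LinearMap.range (ρ : H →ₗ[ℂ] H) ≤ Sp := by
      rintro x ⟨y, rfl⟩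
      show ρ y ∈ Sp
      rw [hρdef]
      exact Submodule.smul_mem _ _ (hsmem y)
    exact Submodule.finiteDimensional_of_le hle
  · -- unitary
    letI : NormedAlgebra ℚ (H →L[ℂ] H) := .restrictScalars ℚ ℂ (H →L[ℂ] H)
    apply NormedSpace.exp_mem_unitary_of_mem_skewAdjoint
    rw [skewAdjoint.mem_iff]
    rw [hρdef, star_smul, hsdef, star_sub,
      ContinuousLinearMap.star_eq_adjoint, ContinuousLinearMap.star_eq_adjoint, hadjv,
      ← hadjv, ContinuousLinearMap.adjoint_adjoint, hadjv]
    simp [Complex.conj_ofReal]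
    module
  · -- finite rank exp ρ - 1
    have hle : LinearMap.range ((NormedSpace.exp ρ - 1 : H →L[ℂ] H) : H →ₗ[ℂ] H) ≤ Sp := by
      rintro x ⟨y, rfl⟩
      show (NormedSpace.exp ρ - 1) y ∈ Sp
      have : (NormedSpace.exp ρ - 1) y = s y + s (s y) := by
        rw [hexpU]
        simp only [ContinuousLinearMap.sub_apply, ContinuousLinearMap.add_apply,
          ContinuousLinearMap.one_apply, pow_two, ContinuousLinearMap.mul_apply]
        abel
      rw [this]
      exact add_mem (hsmem y) (hsmem (s y))
    exact Submodule.finiteDimensional_of_le hle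
  · -- the Hilbert-Schmidt bound
    have hpars : ∀ y : H, HasSum (fun i => ‖⟪y, b i⟫_ℂ‖ ^ 2) (‖y‖ ^ 2) := by
      intro y
      have h0 := b.hasSum_inner_mul_inner y y
      have h1 := (Complex.reCLM : ℂ →L[ℝ] ℝ).hasSum h0
      convert h1 using 1
      · funext i
        simp only [Complex.reCLM_apply]
        rw [← inner_conj_symm (b i) y, RCLike.mul_conj]
        simp [← Complex.ofReal_pow]
      · simp only [Complex.reCLM_apply]
        rw [← inner_self_eq_norm_sq (𝕜 := ℂ), RCLike.re_to_complex]
    have hnormy : ∀ x : H,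
        ‖((2 * Complex.I) • (v + w) : H →L[ℂ] H) x‖ ^ 2
          = 4 * ((∑ j, ‖⟪e j, x⟫_ℂ‖ ^ 2) + ∑ j, ‖⟪f j, x⟫_ℂ‖ ^ 2) := by
      intro x
      rw [ContinuousLinearMap.smul_apply, norm_smul]
      have h2I : ‖(2 * Complex.I : ℂ)‖ = 2 := by
        simp
      rw [h2I]
      have hy : (v + w) x = (∑ j, ⟪f j, x⟫_ℂ • e j) + ∑ j, ⟪e j, x⟫_ℂ • f j := by
        rw [ContinuousLinearMap.add_apply, hva x, hwa x]
      have hab : ⟪∑ j, ⟪f j, x⟫_ℂ • e j, ∑ j, ⟪e j, x⟫_ℂ • f j⟫_ℂ = 0 := by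
        simp [sum_inner, inner_sum, inner_smul_left, inner_smul_right, hef]
      have ha : ‖∑ j, ⟪f j, x⟫_ℂ • e j‖ ^ 2 = ∑ j, ‖⟪f j, x⟫_ℂ‖ ^ 2 := by
        rw [← inner_self_eq_norm_sq (𝕜 := ℂ), he.inner_sum, RCLike.re_to_complex, Complex.re_sum]
        refine Finset.sum_congr rfl fun j _ => ?_
        rw [RCLike.conj_mul]
        simp [← Complex.ofReal_pow]
      have hb : ‖∑ j, ⟪e j, x⟫_ℂ • f j‖ ^ 2 = ∑ j, ‖⟪e j, x⟫_ℂ‖ ^ 2 := by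
        rw [← inner_self_eq_norm_sq (𝕜 := ℂ), hf.inner_sum, RCLike.re_to_complex, Complex.re_sum]
        refine Finset.sum_congr rfl fun j _ => ?_
        rw [RCLike.conj_mul]
        simp [← Complex.ofReal_pow]
      rw [hy, mul_pow, norm_add_sq (𝕜 := ℂ), hab, ha, hb]
      simp only [map_zero, mul_zero, add_zero]
      ring
    have He := hasSum_sum (s := (Finset.univ : Finset (Fin n)))
      (f := fun j i => ‖⟪e j, b i⟫_ℂ‖ ^ 2) (a := fun j => ‖e j‖ ^ 2)
      (fun j _ => hpars (e j))
    have Hf := hasSum_sum (s := (Finset.univ : Finset (Fin n)))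
      (f := fun j i => ‖⟪f j, b i⟫_ℂ‖ ^ 2) (a := fun j => ‖f j‖ ^ 2)
      (fun j _ => hpars (f j))
    have Hall := (He.add Hf).mul_left 4
    have hfun : (fun i => ‖(dOp P * NormedSpace.exp ρ - NormedSpace.exp ρ * dOp P) (b i)‖ ^ 2)
        = fun i => 4 * ((∑ j, ‖⟪e j, b i⟫_ℂ‖ ^ 2) + ∑ j, ‖⟪f j, b i⟫_ℂ‖ ^ 2) := by
      funext i
      rw [hT]
      exact hnormy (b i)
    have htsum : (∑' i, ‖(dOp P * NormedSpace.exp ρ - NormedSpace.exp ρ * dOp P) (b i)‖ ^ 2)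
        = 4 * ((∑ j : Fin n, ‖e j‖ ^ 2) + ∑ j : Fin n, ‖f j‖ ^ 2) := by
      rw [hfun]
      exact Hall.tsum_eq
    rw [htsum]
    apply Real.sqrt_le_sqrt
    have hne : ∀ j, ‖e j‖ = 1 := he.1
    have hnf : ∀ j, ‖f j‖ = 1 := hf.1
    simp only [hne, hnf, one_pow, Finset.sum_const, Finset.card_univ, Fintype.card_fin,
      nsmul_eq_mul, mul_one]
    have : (0 : ℝ) ≤ (n : ℝ) := Nat.cast_nonneg n
    linarith
end
end

section
/- Let g be a unitary operator on H = H₊ ⊕ H₋ whose off-diagonal blocks g₊₋ = p₊ g p₋ and g₋₊ = p₋ g p₊ are Hilbert–Schmidt. Then g d g⁻¹ − d is a skew-adjoint operator whose off-diagonal blocks are Hilbert–Schmidt and whose diagonal blocks p₊(gdg⁻¹ − d)p₊ and p₋(gdg⁻¹ − d)p₋ are trace class. -/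
open ContinuousLinearMap

noncomputable section

section Lemmas

variable {H : Type*} [NormedAddCommGroup H] [InnerProductSpace ℂ H] [CompleteSpace H]

omit [CompleteSpace H] in
/-- Parseval identity for a Hilbert basis. -/
lemma parseval_aux {ι : Type} (b : HilbertBasis ι ℂ H) (x : H) :
    HasSum (fun i => ‖(inner ℂ (b i) x : ℂ)‖ ^ 2) (‖x‖ ^ 2) := by
  have h := (b.hasSum_inner_mul_inner x x).mapL Complex.reCLM
  simp only [Complex.reCLM_apply] at h
  convert h using 2 with i
  · rw [← inner_conj_symm x (b i), RCLike.conj_mul]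
    simp [← Complex.ofReal_pow]
  · rw [inner_self_eq_norm_sq_to_K]
    simp [← Complex.ofReal_pow]

omit [CompleteSpace H] in
lemma IsHS.mul_left' {T : H →L[ℂ] H} (h : IsHS T) (A : H →L[ℂ] H) : IsHS (A * T) := by
  obtain ⟨ι, b, hb⟩ := h
  refine ⟨ι, b, Summable.of_nonneg_of_le (fun i => by positivity)
    (fun i => ?_) (hb.mul_left (‖A‖ ^ 2))⟩
  calc ‖(A * T) (b i)‖ ^ 2 = ‖A (T (b i))‖ ^ 2 := rfl
    _ ≤ (‖A‖ * ‖T (b i)‖) ^ 2 := by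
        gcongr
        exact A.le_opNorm _
    _ = ‖A‖ ^ 2 * ‖T (b i)‖ ^ 2 := by ring

lemma IsHS.star' {T : H →L[ℂ] H} (h : IsHS T) : IsHS (star T) := by
  obtain ⟨ι, b, hb⟩ := h
  refine ⟨ι, b, ?_⟩
  have h1 : ∀ i, HasSum (fun j => ‖(inner ℂ (b j) (T (b i)) : ℂ)‖ ^ 2) (‖T (b i)‖ ^ 2) :=
    fun i => parseval_aux b (T (b i))
  have h3 : ∀ j, HasSum (fun i => ‖(inner ℂ (b j) (T (b i)) : ℂ)‖ ^ 2) (‖(star T) (b j)‖ ^ 2) := by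
    intro j
    have h4 := parseval_aux b ((star T) (b j))
    convert h4 using 2 with i
    rw [star_eq_adjoint, adjoint_inner_right, norm_inner_symm]
  have hsum : Summable (fun p : ι × ι => ‖(inner ℂ (b p.2) (T (b p.1)) : ℂ)‖ ^ 2) := by
    rw [summable_prod_of_nonneg (fun p => by positivity)]
    refine ⟨fun i => (h1 i).summable, ?_⟩
    have he : (fun i => ∑' j, ‖(inner ℂ (b j) (T (b i)) : ℂ)‖ ^ 2) = fun i => ‖T (b i)‖ ^ 2 := by
      funext i; exact (h1 i).tsum_eq
    rw [he]; exact hb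
  have hswap : Summable (fun p : ι × ι => ‖(inner ℂ (b p.1) (T (b p.2)) : ℂ)‖ ^ 2) :=
    hsum.prod_symm
  have h2 := (summable_prod_of_nonneg
    (f := fun p : ι × ι => ‖(inner ℂ (b p.1) (T (b p.2)) : ℂ)‖ ^ 2)
    (fun p => by positivity)).mp hswap
  have he : (fun j => ∑' i, ‖(inner ℂ (b j) (T (b i)) : ℂ)‖ ^ 2)
      = fun j => ‖(star T) (b j)‖ ^ 2 := by
    funext j; exact (h3 j).tsum_eq
  rw [he] at h2
  exact h2.2

lemma IsHS.mul_right' {T : H →L[ℂ] H} (h : IsHS T) (A : H →L[ℂ] H) : IsHS (T * A) := by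
  have := (h.star'.mul_left' (star A)).star'
  simpa [star_mul] using this

omit [CompleteSpace H] in
lemma IsHS.smul' {T : H →L[ℂ] H} (h : IsHS T) (c : ℂ) : IsHS (c • T) := by
  obtain ⟨ι, b, hb⟩ := h
  refine ⟨ι, b, ?_⟩
  have he : (fun i => ‖(c • T) (b i)‖ ^ 2) = fun i => ‖c‖ ^ 2 * ‖T (b i)‖ ^ 2 := by
    funext i; simp [norm_smul, mul_pow]
  rw [he]; exact hb.mul_left _

end Lemmas

/-- If `g` is a unitary with Hilbert–Schmidt off-diagonal blocks, then `gdg⁻¹ - d` is skew-adjoint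
with Hilbert–Schmidt off-diagonal blocks and trace-class diagonal blocks. -/
theorem stmt7 {H : Type*} [NormedAddCommGroup H] [InnerProductSpace ℂ H] [CompleteSpace H]
    (P : H →L[ℂ] H) (hP : IsSelfAdjoint P) (hP2 : P * P = P)
    (g : H →L[ℂ] H) (hg : g ∈ unitary (H →L[ℂ] H))
    (h1 : IsHS (P * g * (1 - P))) (h2 : IsHS ((1 - P) * g * P)) :
    ∀ X : H →L[ℂ] H, X = g * dOp P * star g - dOp P →
      star X = -X ∧
      IsHS (P * X * (1 - P)) ∧
      IsHS ((1 - P) * X * P) ∧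
      IsTC (P * X * P) ∧
      IsTC ((1 - P) * X * (1 - P)) := by
  intro X hX
  obtain ⟨hgg', hgg⟩ := Unitary.mem_iff.mp hg
  -- hgg' : star g * g = 1, hgg : g * star g = 1
  have hP2a : ∀ x : H →L[ℂ] H, P*(P*x) = P*x := fun x => by rw [← mul_assoc, hP2]
  have hgga : ∀ x : H →L[ℂ] H, g*(star g * x) = x := fun x => by rw [← mul_assoc, hgg, one_mul]
  have hggb : ∀ x : H →L[ℂ] H, star g*(g*x) = x := fun x => by rw [← mul_assoc, hgg', one_mul]
  -- A simplified expression for X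
  have hA : X = (2*Complex.I) • (g * P * star g - P) := by
    rw [hX, dOp]
    simp only [smul_sub, smul_mul_assoc, mul_smul_comm, mul_sub, sub_mul, mul_one, one_mul, hgg]
    module
  -- Block identities
  have E1 : P * X * (1-P) = (2*Complex.I) • ((P * g) * (P * star g * (1-P))) := by
    rw [hA]
    simp only [mul_sub, sub_mul, mul_one, one_mul, smul_sub, smul_mul_assoc, mul_smul_comm,
      mul_assoc, hP2, hgg, hgg', hP2a, hgga, hggb]
    module
  have E2 : (1-P) * X * P = (2*Complex.I) • (((1-P) * g * P) * (star g * P)) := by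
    rw [hA]
    simp only [mul_sub, sub_mul, mul_one, one_mul, smul_sub, smul_mul_assoc, mul_smul_comm,
      mul_assoc, hP2, hgg, hgg', hP2a, hgga, hggb]
    module
  have E3 : P * X * P = (-(2*Complex.I)) • ((P * g * (1-P)) * ((1-P) * star g * P)) := by
    rw [hA]
    simp only [mul_sub, sub_mul, mul_one, one_mul, smul_sub, smul_mul_assoc, mul_smul_comm,
      mul_assoc, hP2, hgg, hgg', hP2a, hgga, hggb]
    module
  have E4 : (1-P) * X * (1-P) = (2*Complex.I) • (((1-P) * g * P) * (P * star g * (1-P))) := by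
    rw [hA]
    simp only [mul_sub, sub_mul, mul_one, one_mul, smul_sub, smul_mul_assoc, mul_smul_comm,
      mul_assoc, hP2, hgg, hgg', hP2a, hgga, hggb]
    module
  -- Stars of the off-diagonal blocks
  have hs1 : IsHS ((1-P) * star g * P) := by
    have := h1.star'
    have he : star (P * g * (1 - P)) = (1-P) * star g * P := by
      simp only [star_mul, star_sub, star_one, hP.star_eq, mul_assoc]
    rwa [he] at this
  have hs2 : IsHS (P * star g * (1-P)) := by
    have := h2.star'
    have he : star ((1 - P) * g * P) = P * star g * (1-P) := by
      simp only [star_mul, star_sub, star_one, hP.star_eq, mul_assoc]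
    rwa [he] at this
  refine ⟨?_, ?_, ?_, ?_, ?_⟩
  · -- skew-adjoint
    rw [hA]
    simp only [star_smul, star_sub, star_mul, star_star, hP.star_eq, RCLike.star_def, map_mul,
      Complex.conj_I, Complex.conj_ofNat, mul_assoc]
    module
  · rw [E1]
    exact ((hs2.mul_left' (P * g)).smul' _)
  · rw [E2]
    exact ((h2.mul_right' (star g * P)).smul' _)
  · refine ⟨(-(2*Complex.I)) • (P * g * (1-P)), (1-P) * star g * P,
      h1.smul' _, hs1, ?_⟩
    rw [E3, smul_mul_assoc]
  · refine ⟨(2*Complex.I) • ((1-P) * g * P), P * star g * (1-P),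
      h2.smul' _, hs2, ?_⟩
    rw [E4, smul_mul_assoc]
end
end

section
/- The bilinear form s(A,B) = Tr(A[d,B]) is well defined on u_res × u_res and is a continuous Lie algebra 2-cocycle: s is antisymmetric and satisfies s([A,B],C) + s([B,C],A) + s([C,A],B) = 0 for all A, B, C ∈ u_res. -/
open ContinuousLinearMap

noncomputable section

/-- The Schwinger-type cocycle `s(A,B) = Tr(A[d,B])`, computed along a Hilbert basis adapted to the
decomposition `H = H₊ ⊕ H₋`. -/
def sForm {H : Type*} [NormedAddCommGroup H] [InnerProductSpace ℂ H]
    (P : H →L[ℂ] H) {ι : Type*} (b : HilbertBasis ι ℂ H) (A B : H →L[ℂ] H) : ℂ :=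
  ∑' i, (inner ℂ (b i) ((A * (dOp P * B - B * dOp P)) (b i)) : ℂ)

section Aux

set_option linter.unusedSectionVars false
set_option maxHeartbeats 1000000

variable {H : Type*} [NormedAddCommGroup H] [InnerProductSpace ℂ H] [CompleteSpace H]

local notation "⟪" x ", " y "⟫" => @inner ℂ _ _ x y

lemma parseval {ι : Type*} (b : HilbertBasis ι ℂ H) (x : H) :
    HasSum (fun i => ‖⟪b i, x⟫‖ ^ 2) (‖x‖ ^ 2) := by
  have h := b.hasSum_inner_mul_inner x x
  rw [inner_self_eq_norm_sq_to_K] at h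
  have h3 : HasSum (fun i => ((‖⟪b i, x⟫‖ ^ 2 : ℝ) : ℂ)) (((‖x‖ ^ 2 : ℝ)) : ℂ) := by
    convert h using 2 with i
    · rfl
    · rw [← inner_conj_symm x (b i), RCLike.conj_mul]; norm_cast
    · norm_cast
  exact Complex.hasSum_ofReal.mp h3

lemma hsAux {ι κ : Type*} (e : HilbertBasis ι ℂ H) (f : HilbertBasis κ ℂ H) {T : H →L[ℂ] H}
    (h : Summable fun i => ‖T (e i)‖ ^ 2) :
    Summable fun j => ‖(ContinuousLinearMap.adjoint T) (f j)‖ ^ 2 := by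
  set g : ι × κ → ℝ := fun p => ‖⟪T (e p.1), f p.2⟫‖ ^ 2 with hg
  have hg0 : 0 ≤ g := fun p => sq_nonneg _
  have hrow : ∀ i, HasSum (fun j => g (i, j)) (‖T (e i)‖ ^ 2) := fun i => by
    have h1 := parseval f (T (e i))
    simpa [g, norm_inner_symm] using h1
  have hgsum : Summable g :=
    (summable_prod_of_nonneg hg0).mpr
      ⟨fun i => (hrow i).summable, h.congr fun i => ((hrow i).tsum_eq).symm⟩
  have hswap : Summable fun p : κ × ι => g (p.2, p.1) :=
    ((Equiv.prodComm κ ι).summable_iff).mpr hgsum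
  have hcol : ∀ j, HasSum (fun i => g (i, j)) (‖(ContinuousLinearMap.adjoint T) (f j)‖ ^ 2) :=
    fun j => by
      have h1 := parseval e ((ContinuousLinearMap.adjoint T) (f j))
      simpa [g, adjoint_inner_right] using h1
  have h2 := (summable_prod_of_nonneg (f := fun p : κ × ι => g (p.2, p.1))
      (fun p => hg0 _)).mp hswap
  exact h2.2.congr fun j => (hcol j).tsum_eq

lemma IsHS.summable {κ : Type*} {T : H →L[ℂ] H} (h : IsHS T) (f : HilbertBasis κ ℂ H) :
    Summable fun j => ‖T (f j)‖ ^ 2 := by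
  obtain ⟨ι₀, e, he⟩ := h
  have h1 := hsAux e e he
  have h2 := hsAux e f h1
  rwa [adjoint_adjoint] at h2

lemma IsHS.adj {T : H →L[ℂ] H} (h : IsHS T) : IsHS (ContinuousLinearMap.adjoint T) := by
  obtain ⟨ι₀, e, he⟩ := h
  exact ⟨ι₀, e, hsAux e e he⟩

lemma IsHS.lmul {T : H →L[ℂ] H} (h : IsHS T) (L : H →L[ℂ] H) : IsHS (L * T) := by
  obtain ⟨ι₀, e, he⟩ := h
  refine ⟨ι₀, e, Summable.of_nonneg_of_le (fun i => sq_nonneg _) (fun i => ?_)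
    (he.mul_left (‖L‖ ^ 2))⟩
  have h1 : ‖(L * T) (e i)‖ ≤ ‖L‖ * ‖T (e i)‖ := by
    rw [ContinuousLinearMap.mul_apply]; exact L.le_opNorm _
  calc ‖(L * T) (e i)‖ ^ 2 ≤ (‖L‖ * ‖T (e i)‖) ^ 2 :=
        pow_le_pow_left₀ (norm_nonneg _) h1 2
    _ = ‖L‖ ^ 2 * ‖T (e i)‖ ^ 2 := by ring

lemma IsHS.rmul {T : H →L[ℂ] H} (h : IsHS T) (L : H →L[ℂ] H) : IsHS (T * L) := by
  have h1 : T * L = ContinuousLinearMap.adjoint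
      ((ContinuousLinearMap.adjoint L) * (ContinuousLinearMap.adjoint T)) := by
    have := ContinuousLinearMap.adjoint_comp (ContinuousLinearMap.adjoint L)
      (ContinuousLinearMap.adjoint T)
    rw [show (ContinuousLinearMap.adjoint L) * (ContinuousLinearMap.adjoint T) =
      (ContinuousLinearMap.adjoint L).comp (ContinuousLinearMap.adjoint T) from rfl, this,
      adjoint_adjoint, adjoint_adjoint]
    rfl
  rw [h1]
  exact (h.adj.lmul (ContinuousLinearMap.adjoint L)).adj

/-- The diagonal entries of an operator along a Hilbert basis. -/
def dg {ι : Type*} (b : HilbertBasis ι ℂ H) (T : H →L[ℂ] H) : ι → ℂ :=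
  fun i => ⟪b i, T (b i)⟫

/-- The trace of an operator along a Hilbert basis. -/
def tr {ι : Type*} (b : HilbertBasis ι ℂ H) (T : H →L[ℂ] H) : ℂ :=
  ∑' i, dg b T i

lemma traceAux {ι : Type*} (b : HilbertBasis ι ℂ H) {S T : H →L[ℂ] H}
    (hS : IsHS S) (hT : IsHS T) :
    HasSum (dg b (S * T)) (∑' p : ι × ι, ⟪b p.1, S (b p.2)⟫ * ⟪b p.2, T (b p.1)⟫) := by
  set F : ι × ι → ℂ := fun p => ⟪b p.1, S (b p.2)⟫ * ⟪b p.2, T (b p.1)⟫ with hF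
  have e1 : ∀ i, HasSum (fun j => ‖⟪b i, S (b j)⟫‖ ^ 2)
      (‖(ContinuousLinearMap.adjoint S) (b i)‖ ^ 2) := fun i => by
    have h1 := parseval b ((ContinuousLinearMap.adjoint S) (b i))
    have h2 : ∀ j, ‖⟪b j, (ContinuousLinearMap.adjoint S) (b i)⟫‖ = ‖⟪b i, S (b j)⟫‖ := fun j => by
      rw [norm_inner_symm, adjoint_inner_left]
    simpa [h2] using h1
  have h1 : Summable (fun p : ι × ι => ‖⟪b p.1, S (b p.2)⟫‖ ^ 2) :=
    (summable_prod_of_nonneg (fun _ => sq_nonneg _)).mpr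
      ⟨fun i => (e1 i).summable, (hS.adj.summable b).congr fun i => ((e1 i).tsum_eq).symm⟩
  have e2 : ∀ i, HasSum (fun j => ‖⟪b j, T (b i)⟫‖ ^ 2) (‖T (b i)‖ ^ 2) :=
    fun i => parseval b (T (b i))
  have h2 : Summable (fun p : ι × ι => ‖⟪b p.2, T (b p.1)⟫‖ ^ 2) :=
    (summable_prod_of_nonneg (fun _ => sq_nonneg _)).mpr
      ⟨fun i => (e2 i).summable, (hT.summable b).congr fun i => ((e2 i).tsum_eq).symm⟩
  have hFsum : Summable F := by
    apply Summable.of_norm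
    apply Summable.of_nonneg_of_le (fun p => norm_nonneg _) (fun p => ?_) ((h1.add h2).div_const 2)
    have : ‖F p‖ = ‖⟪b p.1, S (b p.2)⟫‖ * ‖⟪b p.2, T (b p.1)⟫‖ := norm_mul _ _
    rw [this]
    nlinarith [sq_nonneg (‖⟪b p.1, S (b p.2)⟫‖ - ‖⟪b p.2, T (b p.1)⟫‖),
      norm_nonneg (⟪b p.1, S (b p.2)⟫), norm_nonneg (⟪b p.2, T (b p.1)⟫)]
  have hfib : ∀ i, HasSum (fun j => F (i, j)) (dg b (S * T) i) := fun i => by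
    have h := b.hasSum_inner_mul_inner ((ContinuousLinearMap.adjoint S) (b i)) (T (b i))
    have h3 : ∀ j, ⟪(ContinuousLinearMap.adjoint S) (b i), b j⟫ = ⟪b i, S (b j)⟫ := fun j =>
      adjoint_inner_left S (b j) (b i)
    simpa [F, dg, h3, adjoint_inner_left, ContinuousLinearMap.mul_apply] using h
  exact hFsum.hasSum.prod_fiberwise hfib

lemma tr_summable {ι : Type*} (b : HilbertBasis ι ℂ H) {S T : H →L[ℂ] H}
    (hS : IsHS S) (hT : IsHS T) : Summable (dg b (S * T)) :=
  (traceAux b hS hT).summable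

lemma tr_cyclic {ι : Type*} (b : HilbertBasis ι ℂ H) {S T : H →L[ℂ] H}
    (hS : IsHS S) (hT : IsHS T) : tr b (S * T) = tr b (T * S) := by
  rw [tr, (traceAux b hS hT).tsum_eq, tr, (traceAux b hT hS).tsum_eq]
  rw [← (Equiv.prodComm ι ι).tsum_eq (fun p : ι × ι => ⟪b p.1, T (b p.2)⟫ * ⟪b p.2, S (b p.1)⟫)]
  exact tsum_congr fun p => mul_comm _ _

lemma tr_neg {ι : Type*} (b : HilbertBasis ι ℂ H) (S : H →L[ℂ] H) :
    tr b (-S) = -tr b S := by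
  rw [tr, tr, ← tsum_neg]
  exact tsum_congr fun i => by simp [dg, inner_neg_right]

lemma tr_expand {ι : Type*} (b : HilbertBasis ι ℂ H) {T1 T2 T3 T4 : H →L[ℂ] H}
    (h1 : Summable (dg b T1)) (h2 : Summable (dg b T2))
    (h3 : Summable (dg b T3)) (h4 : Summable (dg b T4)) :
    tr b (T1 - T2 + (T3 - T4)) = tr b T1 - tr b T2 + (tr b T3 - tr b T4) := by
  have hdg : dg b (T1 - T2 + (T3 - T4)) =
      fun i => dg b T1 i - dg b T2 i + (dg b T3 i - dg b T4 i) := by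
    funext i
    simp [dg, inner_add_right, inner_sub_right]
  rw [tr, hdg, Summable.tsum_add (h1.sub h2) (h3.sub h4), Summable.tsum_sub h1 h2, Summable.tsum_sub h3 h4]
  rfl

lemma d_sq {P : H →L[ℂ] H} (hP2 : P * P = P) : dOp P * dOp P = -1 := by
  have hS : (P - (1 - P)) * (P - (1 - P)) = 1 := by
    calc (P - (1 - P)) * (P - (1 - P)) = 4 * (P * P) - 4 * P + 1 := by noncomm_ring
    _ = 1 := by rw [hP2]; noncomm_ring
  rw [dOp, smul_mul_assoc, mul_smul_comm, smul_smul, hS, Complex.I_mul_I]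
  simp

lemma d_anti {P : H →L[ℂ] H} (hP2 : P * P = P) (M : H →L[ℂ] H) :
    dOp P * (dOp P * M - M * dOp P) + (dOp P * M - M * dOp P) * dOp P = 0 := by
  have h1 : dOp P * (dOp P * M - M * dOp P) + (dOp P * M - M * dOp P) * dOp P
      = (dOp P * dOp P) * M - M * (dOp P * dOp P) := by noncomm_ring
  rw [h1, d_sq hP2]; noncomm_ring

lemma d_anti' {P : H →L[ℂ] H} (hP2 : P * P = P) (M : H →L[ℂ] H) :
    (dOp P * M - M * dOp P) * dOp P = -(dOp P * (dOp P * M - M * dOp P)) :=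
  eq_neg_of_add_eq_zero_left (by rw [add_comm]; exact d_anti hP2 M)

lemma d_anti'' {P : H →L[ℂ] H} (hP2 : P * P = P) (M : H →L[ℂ] H) :
    dOp P * (dOp P * M - M * dOp P) = -((dOp P * M - M * dOp P) * dOp P) :=
  eq_neg_of_add_eq_zero_left (d_anti hP2 M)

lemma key_id {P : H →L[ℂ] H} (hP2 : P * P = P) (M N : H →L[ℂ] H) :
    (dOp P * M - M * dOp P) * (dOp P * (dOp P * N - N * dOp P))
      = M * (dOp P * N - N * dOp P) - dOp P * (M * (dOp P * N - N * dOp P)) * dOp P := by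
  set d := dOp P
  set Y := d * N - N * d with hY
  have hYd : Y * d = -(d * Y) := d_anti' hP2 N
  calc (d * M - M * d) * (d * Y)
      = d * (M * (d * Y)) - M * ((d * d) * Y) := by noncomm_ring
    _ = d * (M * (d * Y)) + M * Y := by rw [d_sq hP2]; noncomm_ring
    _ = M * Y - d * (M * (Y * d)) := by rw [hYd]; noncomm_ring
    _ = M * Y - d * (M * Y) * d := by noncomm_ring

lemma d_adj {P : H →L[ℂ] H} (hP : IsSelfAdjoint P) :
    ContinuousLinearMap.adjoint (dOp P) = -(dOp P) := by
  rw [← star_eq_adjoint, dOp, star_smul, star_sub, star_sub, star_one,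
    hP.star_eq, Complex.star_def, Complex.conj_I, neg_smul]

lemma d_eig {P : H →L[ℂ] H} {e : H} (he : P e = e ∨ P e = 0) :
    dOp P e = Complex.I • e ∨ dOp P e = -(Complex.I • e) := by
  rcases he with h | h
  · left
    simp [dOp, ContinuousLinearMap.smul_apply, ContinuousLinearMap.sub_apply,
      ContinuousLinearMap.one_apply, h]
  · right
    simp [dOp, ContinuousLinearMap.smul_apply, ContinuousLinearMap.sub_apply,
      ContinuousLinearMap.one_apply, h]

lemma vec_lemma {P : H →L[ℂ] H} (hP : IsSelfAdjoint P) {e : H} (he : P e = e ∨ P e = 0)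
    (S : H →L[ℂ] H) : ⟪e, (dOp P * S * dOp P) e⟫ = -⟪e, S e⟫ := by
  have h1 : (dOp P * S * dOp P) e = dOp P (S (dOp P e)) := rfl
  rw [h1, ← adjoint_inner_left, d_adj hP]
  rcases d_eig he with h | h <;>
    simp [h, inner_smul_left, inner_smul_right, Complex.conj_I, map_smul, Complex.I_sq] <;>
    rw [← mul_assoc, Complex.I_mul_I] <;> ring

lemma diag_lemma {P : H →L[ℂ] H} (hP : IsSelfAdjoint P) (hP2 : P * P = P)
    {e : H} (he : P e = e ∨ P e = 0) (M N : H →L[ℂ] H) :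
    ⟪e, (M * (dOp P * N - N * dOp P)) e⟫
      = (1 / 2 : ℂ) * ⟪e, ((dOp P * M - M * dOp P) * (dOp P * (dOp P * N - N * dOp P))) e⟫ := by
  rw [key_id hP2 M N, ContinuousLinearMap.sub_apply, inner_sub_right,
    vec_lemma hP he (M * (dOp P * N - N * dOp P))]
  ring

lemma sForm_eq {P : H →L[ℂ] H} (hP : IsSelfAdjoint P) (hP2 : P * P = P)
    {ι : Type*} (b : HilbertBasis ι ℂ H) (hb : ∀ i, P (b i) = b i ∨ P (b i) = 0)
    (M N : H →L[ℂ] H) :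
    sForm P b M N
      = (1 / 2 : ℂ) * tr b ((dOp P * M - M * dOp P) * (dOp P * (dOp P * N - N * dOp P))) := by
  rw [sForm, tr, ← tsum_mul_left]
  exact tsum_congr fun i => diag_lemma hP hP2 (hb i) M N

lemma pair_lemma {ι : Type*} (b : HilbertBasis ι ℂ H) {d x y : H →L[ℂ] H} (M : H →L[ℂ] H)
    (hx : IsHS x) (hy : IsHS y) (hdy : d * y = -(y * d)) :
    tr b ((x * M) * (d * y)) = -(tr b ((M * y) * (d * x))) := by
  rw [mul_assoc, tr_cyclic b hx ((hy.lmul d).lmul M)]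
  have s2 : (M * (d * y)) * x = -((M * y) * (d * x)) := by rw [hdy]; noncomm_ring
  rw [s2, tr_neg]

end Aux

set_option maxHeartbeats 1000000 in
/-- `s(A,B) = Tr(A[d,B])` is well defined on `u_res × u_res` and is a Lie algebra 2-cocycle:
it is antisymmetric and satisfies the cocycle (Jacobi-type) identity. -/
theorem stmt11 {H : Type*} [NormedAddCommGroup H] [InnerProductSpace ℂ H] [CompleteSpace H]
    (P : H →L[ℂ] H) (hP : IsSelfAdjoint P) (hP2 : P * P = P)
    {ι : Type*} (b : HilbertBasis ι ℂ H)
    (hb : ∀ i, P (b i) = b i ∨ P (b i) = 0)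
    (A B C : H →L[ℂ] H)
    (hA1 : star A = -A) (hA2 : IsHS (dOp P * A - A * dOp P))
    (hB1 : star B = -B) (hB2 : IsHS (dOp P * B - B * dOp P))
    (hC1 : star C = -C) (hC2 : IsHS (dOp P * C - C * dOp P)) :
    (Summable fun i => (inner ℂ (b i) ((A * (dOp P * B - B * dOp P)) (b i)) : ℂ)) ∧
    sForm P b A B = -sForm P b B A ∧
    sForm P b (A * B - B * A) C + sForm P b (B * C - C * B) A +
      sForm P b (C * A - A * C) B = 0 := by
  have hda : dOp P * (dOp P * A - A * dOp P) = -((dOp P * A - A * dOp P) * dOp P) :=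
    d_anti'' hP2 A
  have hdb : dOp P * (dOp P * B - B * dOp P) = -((dOp P * B - B * dOp P) * dOp P) :=
    d_anti'' hP2 B
  have hdc : dOp P * (dOp P * C - C * dOp P) = -((dOp P * C - C * dOp P) * dOp P) :=
    d_anti'' hP2 C
  refine ⟨?_, ?_, ?_⟩
  · exact ((tr_summable b hA2 (hB2.lmul (dOp P))).mul_left (1 / 2 : ℂ)).congr
      fun i => (diag_lemma hP hP2 (hb i) A B).symm
  · rw [sForm_eq hP hP2 b hb A B, sForm_eq hP hP2 b hb B A]
    have hop : (dOp P * A - A * dOp P) * (dOp P * (dOp P * B - B * dOp P))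
        = -((dOp P * (dOp P * A - A * dOp P)) * (dOp P * B - B * dOp P)) := by
      rw [← mul_assoc, d_anti' hP2 A]; noncomm_ring
    have q : tr b ((dOp P * A - A * dOp P) * (dOp P * (dOp P * B - B * dOp P)))
        = -(tr b ((dOp P * B - B * dOp P) * (dOp P * (dOp P * A - A * dOp P)))) := by
      rw [hop, tr_neg, tr_cyclic b (hA2.lmul (dOp P)) hB2]
    rw [q]; ring
  · rw [sForm_eq hP hP2 b hb (A * B - B * A) C, sForm_eq hP hP2 b hb (B * C - C * B) A,
      sForm_eq hP hP2 b hb (C * A - A * C) B]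
    have hW1 : (dOp P * (A * B - B * A) - (A * B - B * A) * dOp P)
          * (dOp P * (dOp P * C - C * dOp P))
        = ((dOp P * A - A * dOp P) * B) * (dOp P * (dOp P * C - C * dOp P))
          - (B * (dOp P * A - A * dOp P)) * (dOp P * (dOp P * C - C * dOp P))
          + ((A * (dOp P * B - B * dOp P)) * (dOp P * (dOp P * C - C * dOp P))
          - ((dOp P * B - B * dOp P) * A) * (dOp P * (dOp P * C - C * dOp P))) := by
      noncomm_ring
    have hW2 : (dOp P * (B * C - C * B) - (B * C - C * B) * dOp P)
          * (dOp P * (dOp P * A - A * dOp P))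
        = ((dOp P * B - B * dOp P) * C) * (dOp P * (dOp P * A - A * dOp P))
          - (C * (dOp P * B - B * dOp P)) * (dOp P * (dOp P * A - A * dOp P))
          + ((B * (dOp P * C - C * dOp P)) * (dOp P * (dOp P * A - A * dOp P))
          - ((dOp P * C - C * dOp P) * B) * (dOp P * (dOp P * A - A * dOp P))) := by
      noncomm_ring
    have hW3 : (dOp P * (C * A - A * C) - (C * A - A * C) * dOp P)
          * (dOp P * (dOp P * B - B * dOp P))
        = ((dOp P * C - C * dOp P) * A) * (dOp P * (dOp P * B - B * dOp P))
          - (A * (dOp P * C - C * dOp P)) * (dOp P * (dOp P * B - B * dOp P))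
          + ((C * (dOp P * A - A * dOp P)) * (dOp P * (dOp P * B - B * dOp P))
          - ((dOp P * A - A * dOp P) * C) * (dOp P * (dOp P * B - B * dOp P))) := by
      noncomm_ring
    rw [hW1, hW2, hW3,
      tr_expand b (tr_summable b (hA2.rmul B) (hC2.lmul (dOp P)))
        (tr_summable b (hA2.lmul B) (hC2.lmul (dOp P)))
        (tr_summable b (hB2.lmul A) (hC2.lmul (dOp P)))
        (tr_summable b (hB2.rmul A) (hC2.lmul (dOp P))),
      tr_expand b (tr_summable b (hB2.rmul C) (hA2.lmul (dOp P)))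
        (tr_summable b (hB2.lmul C) (hA2.lmul (dOp P)))
        (tr_summable b (hC2.lmul B) (hA2.lmul (dOp P)))
        (tr_summable b (hC2.rmul B) (hA2.lmul (dOp P))),
      tr_expand b (tr_summable b (hC2.rmul A) (hB2.lmul (dOp P)))
        (tr_summable b (hC2.lmul A) (hB2.lmul (dOp P)))
        (tr_summable b (hA2.lmul C) (hB2.lmul (dOp P)))
        (tr_summable b (hA2.rmul C) (hB2.lmul (dOp P)))]
    have p17 := pair_lemma b B hA2 hC2 hdc
    have p28 := pair_lemma b B hC2 hA2 hda
    have p39 := pair_lemma b A hC2 hB2 hdb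
    have p410 := pair_lemma b A hB2 hC2 hdc
    have p511 := pair_lemma b C hB2 hA2 hda
    have p612 := pair_lemma b C hA2 hB2 hdb
    linear_combination (1 / 2 : ℂ) * (p17 - p28 + p39 - p410 + p511 - p612)
end
end

section
/- If ρ ∈ (u_res)_* satisfies iρ ≥ 0 (i.e., iρ is a positive operator), then ρ is trace class and ‖ρ‖₁ ≤ ‖ρ‖_{(u_res)_*} ≤ (1+√2)·‖ρ‖₁, where ‖ρ‖_{(u_res)_*} = ‖p₊ρp₊‖₁ + ‖p₋ρp₋‖₁ + 2‖p₊ρp₋‖₂. -/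
open ContinuousLinearMap

noncomputable section

section Aux

variable {H : Type*} [NormedAddCommGroup H] [InnerProductSpace ℂ H] [CompleteSpace H]

local notation "⟪" x ", " y "⟫" => @inner ℂ _ _ x y

/-- Parseval identity along a Hilbert basis. -/
lemma my_parseval {ι : Type*} (b : HilbertBasis ι ℂ H) (x : H) :
    HasSum (fun i => ‖(⟪b i, x⟫ : ℂ)‖ ^ 2) (‖x‖ ^ 2) := by
  have h2 := (b.hasSum_inner_mul_inner x x).mapL Complex.reCLM
  have e1 : ∀ i, Complex.reCLM ((⟪x, b i⟫ : ℂ) * ⟪b i, x⟫) = ‖(⟪b i, x⟫ : ℂ)‖ ^ 2 := by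
    intro i
    rw [← inner_conj_symm (b i) x, Complex.reCLM_apply, Complex.mul_conj,
      Complex.normSq_eq_norm_sq, Complex.ofReal_re]
    simp only [Complex.norm_conj]
  have e2 : Complex.reCLM (⟪x, x⟫ : ℂ) = ‖x‖ ^ 2 := by
    rw [@inner_self_eq_norm_sq_to_K ℂ]
    norm_cast
  rw [e2] at h2
  simp only [e1] at h2
  exact h2

set_option maxHeartbeats 1000000 in
/-- Hilbert–Schmidt basis change via the adjoint. -/
lemma my_hs_adjoint {ι κ : Type*} (b : HilbertBasis ι ℂ H) (c : HilbertBasis κ ℂ H)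
    (A : H →L[ℂ] H) (h : Summable fun i => ‖A (b i)‖ ^ 2) :
    Summable fun j => ‖(adjoint A) (c j)‖ ^ 2 := by
  have h1 : ∀ i, HasSum (fun j => ‖(⟪c j, A (b i)⟫ : ℂ)‖ ^ 2) (‖A (b i)‖ ^ 2) :=
    fun i => my_parseval c _
  have hsumf : Summable (fun p : ι × κ => ‖(⟪c p.2, A (b p.1)⟫ : ℂ)‖ ^ 2) := by
    refine (summable_prod_of_nonneg (fun p => sq_nonneg _)).mpr
      ⟨fun i => (h1 i).summable, ?_⟩
    exact h.congr fun i => ((h1 i).tsum_eq).symm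
  have hswap : Summable fun j => ∑' i, ‖(⟪c j, A (b i)⟫ : ℂ)‖ ^ 2 := by
    have hs2 : Summable (fun p : κ × ι => ‖(⟪c p.1, A (b p.2)⟫ : ℂ)‖ ^ 2) := hsumf.prod_symm
    exact ((summable_prod_of_nonneg (fun p => sq_nonneg _)).mp hs2).2
  have h2 : ∀ j, HasSum (fun i => ‖(⟪c j, A (b i)⟫ : ℂ)‖ ^ 2) (‖(adjoint A) (c j)‖ ^ 2) := by
    intro j
    have e : (fun i => ‖(⟪c j, A (b i)⟫ : ℂ)‖ ^ 2)
        = fun i => ‖(⟪b i, (adjoint A) (c j)⟫ : ℂ)‖ ^ 2 := by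
      funext i
      rw [← adjoint_inner_left A (b i) (c j), norm_inner_symm]
    exact e ▸ my_parseval b _
  exact hswap.congr fun j => ((h2 j).tsum_eq)

/-- A Hilbert–Schmidt operator has square-summable columns in every Hilbert basis,
and so does its adjoint. -/
lemma my_hs_basis {ι : Type*} (b : HilbertBasis ι ℂ H) (A : H →L[ℂ] H) (hA : IsHS A) :
    (Summable fun i => ‖A (b i)‖ ^ 2) ∧ (Summable fun i => ‖(adjoint A) (b i)‖ ^ 2) := by
  obtain ⟨ι₀, b₀, h₀⟩ := hA
  refine ⟨?_, my_hs_adjoint b₀ b A h₀⟩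
  have h1 : Summable fun j => ‖(adjoint A) (b₀ j)‖ ^ 2 := my_hs_adjoint b₀ b₀ A h₀
  have h2 := my_hs_adjoint b₀ b (adjoint A) h1
  rwa [adjoint_adjoint] at h2

/-- The diagonal of a trace-class operator is absolutely summable in any Hilbert basis. -/
lemma my_tc_diag {ι : Type*} (b : HilbertBasis ι ℂ H) (T : H →L[ℂ] H) (hT : IsTC T) :
    Summable fun i => ‖(⟪b i, T (b i)⟫ : ℂ)‖ := by
  obtain ⟨A, B, hA, hB, rfl⟩ := hT
  have hA' := (my_hs_basis b A hA).2
  have hB' := (my_hs_basis b B hB).1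
  have hprod : Summable fun i => ‖(adjoint A) (b i)‖ * ‖B (b i)‖ := by
    refine Summable.of_nonneg_of_le (fun i => by positivity) (fun i => ?_)
      ((hA'.add hB').div_const 2)
    nlinarith [sq_nonneg (‖(adjoint A) (b i)‖ - ‖B (b i)‖), norm_nonneg ((adjoint A) (b i)),
      norm_nonneg (B (b i))]
  refine Summable.of_nonneg_of_le (fun i => norm_nonneg _) (fun i => ?_) hprod
  have e : (⟪b i, (A * B) (b i)⟫ : ℂ) = ⟪(adjoint A) (b i), B (b i)⟫ := by
    rw [ContinuousLinearMap.mul_apply, ← adjoint_inner_left A (B (b i)) (b i)]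
  rw [e]
  exact norm_inner_le_norm _ _

end Aux

set_option maxHeartbeats 1600000 in
/-- If `ρ ∈ (u_res)_*` and `iρ ≥ 0`, then `ρ` is trace class and
`‖ρ‖₁ ≤ ‖ρ‖_{(u_res)_*} ≤ (1+√2)‖ρ‖₁`, where
`‖ρ‖_{(u_res)_*} = ‖p₊ρp₊‖₁ + ‖p₋ρp₋‖₁ + 2‖p₊ρp₋‖₂` (trace norms of the positive operators are
expressed as traces along an adapted Hilbert basis). -/
theorem stmt12 {H : Type*} [NormedAddCommGroup H] [InnerProductSpace ℂ H] [CompleteSpace H]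
    (P : H →L[ℂ] H) (hP : IsSelfAdjoint P) (hP2 : P * P = P)
    {ι : Type*} (b : HilbertBasis ι ℂ H)
    (hb : ∀ i, P (b i) = b i ∨ P (b i) = 0)
    (ρ : H →L[ℂ] H)
    (hρ1 : star ρ = -ρ) (hρ2 : IsHS (dOp P * ρ - ρ * dOp P))
    (hρ3 : IsTC (P * ρ * P)) (hρ4 : IsTC ((1 - P) * ρ * (1 - P)))
    (hpos : (Complex.I • ρ).IsPositive) :
    IsTC ρ ∧
    (Summable fun i => (inner ℂ (b i) ((Complex.I • ρ) (b i)) : ℂ).re) ∧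
    (∑' i, (inner ℂ (b i) ((Complex.I • ρ) (b i)) : ℂ).re) ≤
      (∑' i, (inner ℂ (b i) ((P * (Complex.I • ρ) * P) (b i)) : ℂ).re) +
        (∑' i, (inner ℂ (b i) (((1 - P) * (Complex.I • ρ) * (1 - P)) (b i)) : ℂ).re) +
        2 * Real.sqrt (∑' i, ‖(P * ρ * (1 - P)) (b i)‖ ^ 2) ∧
    (∑' i, (inner ℂ (b i) ((P * (Complex.I • ρ) * P) (b i)) : ℂ).re) +
        (∑' i, (inner ℂ (b i) (((1 - P) * (Complex.I • ρ) * (1 - P)) (b i)) : ℂ).re) +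
        2 * Real.sqrt (∑' i, ‖(P * ρ * (1 - P)) (b i)‖ ^ 2) ≤
      (1 + Real.sqrt 2) * ∑' i, (inner ℂ (b i) ((Complex.I • ρ) (b i)) : ℂ).re := by
  classical
  -- notation
  set σ : H →L[ℂ] H := Complex.I • ρ with hσdef
  have hσ0 : 0 ≤ σ := (ContinuousLinearMap.nonneg_iff_isPositive σ).mpr hpos
  set s : H →L[ℂ] H := CFC.sqrt σ with hsdef
  have hs0 : 0 ≤ s := CFC.sqrt_nonneg (a := σ)
  have hsmul : s * s = σ := by
    have h := CFC.sq_sqrt σ hσ0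
    rwa [pow_two] at h
  have hsadj : adjoint s = s := by
    rw [← ContinuousLinearMap.star_eq_adjoint]
    exact ((ContinuousLinearMap.nonneg_iff_isPositive s).mp hs0).isSelfAdjoint
  have hPadj : adjoint P = P := by
    rw [← ContinuousLinearMap.star_eq_adjoint]; exact hP
  set Q : H →L[ℂ] H := 1 - P with hQdef
  have hQadj : adjoint Q = Q := by
    rw [← ContinuousLinearMap.star_eq_adjoint, hQdef, star_sub, star_one, hP.star_eq]
  have hinner_s : ∀ x y : H, (inner ℂ x (σ y) : ℂ) = inner ℂ (s x) (s y) := by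
    intro x y
    conv_lhs => rw [← hsmul]
    rw [ContinuousLinearMap.mul_apply, ← adjoint_inner_left s (s y) x, hsadj]
  have hinner_P : ∀ x y : H, (inner ℂ x (P y) : ℂ) = inner ℂ (P x) y := by
    intro x y
    rw [← adjoint_inner_left P y x, hPadj]
  have hinner_Q : ∀ x y : H, (inner ℂ x (Q y) : ℂ) = inner ℂ (Q x) y := by
    intro x y
    rw [← adjoint_inner_left Q y x, hQadj]
  have hnormsq : ∀ z : H, (inner ℂ z z : ℂ).re = ‖z‖ ^ 2 := by
    intro z
    rw [@inner_self_eq_norm_sq_to_K ℂ]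
    simp [← Complex.ofReal_pow]
  -- diagonal values
  have hPP : ∀ i, (inner ℂ (b i) ((P * σ * P) (b i)) : ℂ).re = ‖s (P (b i))‖ ^ 2 := by
    intro i
    rw [ContinuousLinearMap.mul_apply, ContinuousLinearMap.mul_apply, hinner_P, hinner_s,
      hnormsq]
  have hQQ : ∀ i, (inner ℂ (b i) ((Q * σ * Q) (b i)) : ℂ).re = ‖s (Q (b i))‖ ^ 2 := by
    intro i
    rw [ContinuousLinearMap.mul_apply, ContinuousLinearMap.mul_apply, hinner_Q, hinner_s,
      hnormsq]
  have hDiag : ∀ i, (inner ℂ (b i) (σ (b i)) : ℂ).re = ‖s (P (b i))‖ ^ 2 + ‖s (Q (b i))‖ ^ 2 := by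
    intro i
    have hbase : (inner ℂ (b i) (σ (b i)) : ℂ).re = ‖s (b i)‖ ^ 2 := by
      rw [hinner_s, hnormsq]
    rcases hb i with h | h
    · have hQ0 : Q (b i) = 0 := by
        rw [hQdef]; simp [ContinuousLinearMap.sub_apply, h]
      rw [hbase, hQ0, h]; simp
    · have hQ1 : Q (b i) = b i := by
        rw [hQdef]; simp [ContinuousLinearMap.sub_apply, h]
      rw [hbase, hQ1, h]; simp
  -- summability of the two diagonal blocks
  have hPσP : P * σ * P = Complex.I • (P * ρ * P) := by
    rw [hσdef, mul_smul_comm, smul_mul_assoc]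
  have hQσQ : Q * σ * Q = Complex.I • (Q * ρ * Q) := by
    rw [hσdef, mul_smul_comm, smul_mul_assoc]
  have key_le : ∀ (T : H →L[ℂ] H) (i : ι),
      (inner ℂ (b i) ((Complex.I • T) (b i)) : ℂ).re ≤ ‖(inner ℂ (b i) (T (b i)) : ℂ)‖ := by
    intro T i
    have e : (inner ℂ (b i) ((Complex.I • T) (b i)) : ℂ)
        = Complex.I * inner ℂ (b i) (T (b i)) := by
      rw [ContinuousLinearMap.smul_apply, inner_smul_right]
    rw [e]
    refine le_trans (Complex.re_le_norm _) ?_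
    rw [norm_mul, Complex.norm_I, one_mul]
  have hsumP : Summable fun i => ‖s (P (b i))‖ ^ 2 := by
    refine Summable.of_nonneg_of_le (fun i => sq_nonneg _) (fun i => ?_)
      (my_tc_diag b _ hρ3)
    rw [← hPP i, hPσP]
    exact key_le _ i
  have hsumQ : Summable fun i => ‖s (Q (b i))‖ ^ 2 := by
    refine Summable.of_nonneg_of_le (fun i => sq_nonneg _) (fun i => ?_)
      (my_tc_diag b _ hρ4)
    rw [← hQQ i, hQσQ]
    exact key_le _ i
  have hsumdiag : Summable fun i => (inner ℂ (b i) (σ (b i)) : ℂ).re :=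
    (hsumP.add hsumQ).congr fun i => (hDiag i).symm
  -- s is Hilbert–Schmidt in the basis b
  have hsHS : Summable fun i => ‖s (b i)‖ ^ 2 := by
    refine hsumdiag.congr fun i => ?_
    rw [hinner_s, hnormsq]
  -- trace class
  have hρσ : ρ = (-Complex.I) • σ := by
    rw [hσdef, smul_smul]
    simp [Complex.I_mul_I]
  have hTC : IsTC ρ := by
    obtain ⟨A₀, B₀, hA₀, _, _⟩ := hρ3
    obtain ⟨ι₀, b₀, _⟩ := hA₀
    have hsHS₀ : Summable fun j => ‖s (b₀ j)‖ ^ 2 := by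
      have h := my_hs_adjoint b b₀ s hsHS
      rwa [hsadj] at h
    refine ⟨(-Complex.I) • s, s, ⟨ι₀, b₀, ?_⟩, ⟨ι₀, b₀, hsHS₀⟩, ?_⟩
    · refine hsHS₀.congr fun j => ?_
      rw [ContinuousLinearMap.smul_apply, norm_smul]
      simp
    · rw [smul_mul_assoc, hsmul, hρσ]
  -- tsum identifications
  have e₁ : (∑' i, (inner ℂ (b i) ((P * σ * P) (b i)) : ℂ).re)
      = ∑' i, ‖s (P (b i))‖ ^ 2 := tsum_congr hPP
  have e₂ : (∑' i, (inner ℂ (b i) ((Q * σ * Q) (b i)) : ℂ).re)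
      = ∑' i, ‖s (Q (b i))‖ ^ 2 := tsum_congr hQQ
  have e₀ : (∑' i, (inner ℂ (b i) (σ (b i)) : ℂ).re)
      = (∑' i, ‖s (P (b i))‖ ^ 2) + ∑' i, ‖s (Q (b i))‖ ^ 2 := by
    rw [tsum_congr hDiag]
    exact Summable.tsum_add hsumP hsumQ
  set A := ∑' i, ‖s (P (b i))‖ ^ 2 with hA
  set B := ∑' i, ‖s (Q (b i))‖ ^ 2 with hB
  have hA0 : 0 ≤ A := tsum_nonneg fun i => sq_nonneg _
  have hB0 : 0 ≤ B := tsum_nonneg fun i => sq_nonneg _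
  have hPρQ : P * ρ * Q = (-Complex.I) • (P * σ * Q) := by
    rw [hρσ, mul_smul_comm, smul_mul_assoc]
  have hnn : ∀ i, ‖(P * ρ * Q) (b i)‖ ^ 2 = ‖(P * σ * Q) (b i)‖ ^ 2 := by
    intro i
    rw [hPρQ, ContinuousLinearMap.smul_apply, norm_smul]
    simp
  have eS : (∑' i, ‖(P * ρ * Q) (b i)‖ ^ 2) = ∑' i, ‖(P * σ * Q) (b i)‖ ^ 2 :=
    tsum_congr hnn
  have hybound : ∀ i j, ‖(inner ℂ (b j) ((P * σ * Q) (b i)) : ℂ)‖ ^ 2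
      ≤ ‖s (P (b j))‖ ^ 2 * ‖s (Q (b i))‖ ^ 2 := by
    intro i j
    have e : (inner ℂ (b j) ((P * σ * Q) (b i)) : ℂ)
        = inner ℂ (s (P (b j))) (s (Q (b i))) := by
      rw [ContinuousLinearMap.mul_apply, ContinuousLinearMap.mul_apply, hinner_P, hinner_s]
    rw [e, ← mul_pow]
    exact pow_le_pow_left₀ (norm_nonneg _) (norm_inner_le_norm _ _) 2
  have hy2 : ∀ i, ‖(P * σ * Q) (b i)‖ ^ 2 ≤ A * ‖s (Q (b i))‖ ^ 2 := by
    intro i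
    have hp := my_parseval b ((P * σ * Q) (b i))
    rw [← hp.tsum_eq]
    calc (∑' j, ‖(inner ℂ (b j) ((P * σ * Q) (b i)) : ℂ)‖ ^ 2)
        ≤ ∑' j, ‖s (P (b j))‖ ^ 2 * ‖s (Q (b i))‖ ^ 2 :=
          Summable.tsum_le_tsum (hybound i) hp.summable (hsumP.mul_right _)
      _ = A * ‖s (Q (b i))‖ ^ 2 := tsum_mul_right
  have hSsum : Summable fun i => ‖(P * σ * Q) (b i)‖ ^ 2 :=
    Summable.of_nonneg_of_le (fun i => sq_nonneg _) hy2 (hsumQ.mul_left A)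
  have hSAB : (∑' i, ‖(P * σ * Q) (b i)‖ ^ 2) ≤ A * B := by
    calc (∑' i, ‖(P * σ * Q) (b i)‖ ^ 2)
        ≤ ∑' i, A * ‖s (Q (b i))‖ ^ 2 := Summable.tsum_le_tsum hy2 hSsum (hsumQ.mul_left A)
      _ = A * B := by rw [tsum_mul_left]
  set S := ∑' i, ‖(P * σ * Q) (b i)‖ ^ 2 with hS
  have hsqrt : Real.sqrt S ≤ (A + B) / 2 := by
    have h1 : S ≤ ((A + B) / 2) ^ 2 := by nlinarith [sq_nonneg (A - B)]
    calc Real.sqrt S ≤ Real.sqrt (((A + B) / 2) ^ 2) := Real.sqrt_le_sqrt h1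
      _ = (A + B) / 2 := Real.sqrt_sq (by positivity)
  have h2 : (1 : ℝ) ≤ Real.sqrt 2 := by
    nlinarith [Real.sq_sqrt (by norm_num : (0:ℝ) ≤ 2), Real.sqrt_nonneg 2]
  refine ⟨hTC, hsumdiag, ?_, ?_⟩
  · rw [e₀, e₁, e₂, eS]
    exact le_add_of_nonneg_right (by positivity)
  · rw [e₀, e₁, e₂, eS]
    nlinarith [hsqrt, h2, hA0, hB0, Real.sqrt_nonneg S]
end
end
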